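/- arXiv:math/0602165 — 2 statements merged into one kernel-verified Lean document; each statement's English description precedes it below -/
import Mathlib

section
/- Let (W,S) be a Coxeter system and let I ⊆ S be such that W_I is a maximal finite standard parabolic subgroup of W, i.e., W_I is finite and W_J is infinite for every J with I ⊊ J ⊆ S. Then W_I is a maximal finite subgroup of W: every finite subgroup of W that contains W_I equals W_I. -/
open Real List

namespace CoxAux

variable {B : Type*}

/-- value d = cos(π/m), with convention d = 1 for m = 0 (i.e. m = ∞). -/
noncomputable def dval (m : ℕ) : ℝ := if m = 0 then 1 else Real.cos (Real.pi / m)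

lemma dval_one : dval 1 = -1 := by simp [dval]

/-- Chebyshev-like sequence: u 0 = 0, u 1 = 1, u (k+2) = 2d u(k+1) - u k. -/
noncomputable def useq (d : ℝ) : ℕ → ℝ
  | 0 => 0
  | 1 => 1
  | (n+2) => 2 * d * useq d (n+1) - useq d n

@[simp] lemma useq_zero (d : ℝ) : useq d 0 = 0 := rfl
@[simp] lemma useq_one (d : ℝ) : useq d 1 = 1 := rfl
lemma useq_two (d : ℝ) : useq d 2 = 2 * d := by simp [useq]
lemma useq_succ_succ (d : ℝ) (n : ℕ) :
    useq d (n+2) = 2 * d * useq d (n+1) - useq d n := rfl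

lemma useq_sin (θ : ℝ) : ∀ k : ℕ, useq (Real.cos θ) k * Real.sin θ = Real.sin (k * θ)
  | 0 => by simp
  | 1 => by simp
  | (n+2) => by
      have h1 := useq_sin θ (n+1)
      have h0 := useq_sin θ n
      have key : Real.sin ((↑(n+2) : ℝ) * θ)
          = 2 * Real.cos θ * Real.sin ((↑(n+1) : ℝ) * θ) - Real.sin ((n : ℝ) * θ) := by
        have e1 : ((n+2 : ℕ) : ℝ) * θ = ((n+1 : ℕ) : ℝ) * θ + θ := by push_cast; ring
        have e2 : ((n : ℕ) : ℝ) * θ = ((n+1 : ℕ) : ℝ) * θ - θ := by push_cast; ring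
        rw [e1, e2, Real.sin_add, Real.sin_sub]
        ring
      rw [useq_succ_succ, sub_mul, mul_assoc, h1, h0, key]

lemma useq_linear : ∀ k : ℕ, useq 1 k = k
  | 0 => by simp
  | 1 => by simp
  | (n+2) => by
      rw [useq_succ_succ, useq_linear (n+1), useq_linear n]
      push_cast; ring

variable (M : CoxeterMatrix B)

/-- The Coxeter bilinear form coefficients. -/
noncomputable def kappa (a b : B) : ℝ := -(dval (M a b))

lemma kappa_diag (a : B) : kappa M a a = 1 := by
  simp [kappa, dval, M.diagonal a]

lemma kappa_symm (a b : B) : kappa M a b = kappa M b a := by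
  simp [kappa, M.symmetric a b]

abbrev V (B : Type*) : Type _ := B →₀ ℝ

/-- basis vectors -/
noncomputable def al (b : B) : V B := Finsupp.single b 1

/-- the bilinear form -/
noncomputable def bform (x y : V B) : ℝ :=
  x.sum fun a xa => xa * (y.sum fun b yb => yb * kappa M a b)

lemma bform_def (x y : V B) :
    bform M x y = x.sum fun a xa => xa * (y.sum fun b yb => yb * kappa M a b) := rfl

lemma bform_single_left (a : B) (y : V B) :
    bform M (al a) y = y.sum fun b yb => yb * kappa M a b := by
  unfold bform al
  rw [Finsupp.sum_single_index] <;> simp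

lemma bform_single_single (a b : B) : bform M (al a) (al b) = kappa M a b := by
  rw [bform_single_left]
  unfold al
  rw [Finsupp.sum_single_index (by simp : (0:ℝ) * kappa M a b = 0)]
  exact one_mul _

lemma bform_self (a : B) : bform M (al a) (al a) = 1 := by
  rw [bform_single_single, kappa_diag]

lemma bform_add_right (x y z : V B) :
    bform M x (y + z) = bform M x y + bform M x z := by
  unfold bform
  rw [← Finsupp.sum_add]
  apply Finsupp.sum_congr
  intro a _
  rw [Finsupp.sum_add_index' (by simp) (by intros; ring)]
  ring

lemma bform_smul_right (r : ℝ) (x y : V B) :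
    bform M x (r • y) = r * bform M x y := by
  unfold bform
  rw [Finsupp.mul_sum]
  apply Finsupp.sum_congr
  intro a _
  rw [Finsupp.sum_smul_index (by intros; ring)]
  rw [show (Finsupp.sum y fun b yb => r * yb * kappa M a b)
      = r * Finsupp.sum y fun b yb => yb * kappa M a b by
    rw [Finsupp.mul_sum]; apply Finsupp.sum_congr; intros; ring]
  ring

lemma bform_double (x y : V B) :
    bform M x y = x.sum fun a xa => y.sum fun b yb => xa * yb * kappa M a b := by
  unfold bform
  apply Finsupp.sum_congr
  intro a _
  rw [Finsupp.mul_sum]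
  apply Finsupp.sum_congr
  intro b _
  ring

lemma bform_comm (x y : V B) : bform M x y = bform M y x := by
  rw [bform_double, bform_double, Finsupp.sum_comm]
  apply Finsupp.sum_congr
  intro b _
  apply Finsupp.sum_congr
  intro a _
  rw [kappa_symm]
  ring

lemma bform_add_left (x y z : V B) :
    bform M (x + y) z = bform M x z + bform M y z := by
  rw [bform_comm, bform_add_right, bform_comm M z x, bform_comm M z y]

lemma bform_smul_left (r : ℝ) (x y : V B) :
    bform M (r • x) y = r * bform M x y := by
  rw [bform_comm, bform_smul_right, bform_comm]

lemma bform_neg_right (x y : V B) : bform M x (-y) = -bform M x y := by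
  have := bform_smul_right M (-1) x y
  simpa using this

lemma bform_neg_left (x y : V B) : bform M (-x) y = -bform M x y := by
  rw [bform_comm, bform_neg_right, bform_comm]

lemma bform_sub_right (x y z : V B) :
    bform M x (y - z) = bform M x y - bform M x z := by
  rw [sub_eq_add_neg, bform_add_right, bform_neg_right, sub_eq_add_neg]

/-- the reflection in basis vector `c` -/
noncomputable def sig (c : B) : Module.End ℝ (V B) where
  toFun v := v - (2 * bform M (al c) v) • al c
  map_add' x y := by
    show x + y - (2 * bform M (al c) (x + y)) • al c
      = x - (2 * bform M (al c) x) • al c + (y - (2 * bform M (al c) y) • al c)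
    rw [bform_add_right]; module
  map_smul' r x := by
    show r • x - (2 * bform M (al c) (r • x)) • al c
      = (RingHom.id ℝ) r • (x - (2 * bform M (al c) x) • al c)
    rw [bform_smul_right]
    simp only [RingHom.id_apply]
    module

lemma sig_apply (c : B) (v : V B) :
    sig M c v = v - (2 * bform M (al c) v) • al c := rfl

lemma sig_al_self (c : B) : sig M c (al c) = -al c := by
  rw [sig_apply, bform_self]
  module

lemma sig_apply_orth (c : B) (v : V B) (h : bform M (al c) v = 0) : sig M c v = v := by
  rw [sig_apply, h]; simp

lemma sig_sig (c : B) (v : V B) : sig M c (sig M c v) = v := by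
  rw [sig_apply, sig_apply M c v, bform_sub_right, bform_smul_right, bform_self]
  module

lemma bform_sig_sig (c : B) (x y : V B) :
    bform M (sig M c x) (sig M c y) = bform M x y := by
  simp only [sig_apply, sub_eq_add_neg, ← smul_neg, bform_add_left, bform_add_right,
    bform_smul_left, bform_smul_right, bform_neg_left, bform_neg_right, bform_self]
  rw [bform_comm M (al c) x]
  ring

/-! ### Dihedral computation -/

section Dihedral

variable (i j : B)

/-- letter sequence: `cseq k` is the letter multiplied on the left at step `k`. -/
def cseq (k : ℕ) : B := if Even k then j else i

/-- chain of reflections `sig (cseq (k-1)) * ... * sig (cseq 0)`. -/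
noncomputable def chain : ℕ → Module.End ℝ (V B)
  | 0 => 1
  | (k+1) => sig M (cseq i j k) * chain k

lemma chain_succ (k : ℕ) : chain M i j (k+1) = sig M (cseq i j k) * chain M i j k := rfl

noncomputable def dv : ℝ := dval (M i j)

lemma bform_ij : bform M (al i) (al j) = -(dv M i j) := bform_single_single M i j

lemma bform_ji : bform M (al j) (al i) = -(dv M i j) := by
  rw [bform_comm]; exact bform_ij M i j

lemma sig_i_combo (a b : ℝ) :
    sig M i (a • al i + b • al j) = (2 * dv M i j * b - a) • al i + b • al j := by
  rw [sig_apply, bform_add_right, bform_smul_right, bform_smul_right, bform_self, bform_ij]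
  module

lemma sig_j_combo (a b : ℝ) :
    sig M j (a • al i + b • al j) = a • al i + (2 * dv M i j * a - b) • al j := by
  rw [sig_apply, bform_add_right, bform_smul_right, bform_smul_right, bform_self, bform_ji]
  module

/-- coefficients of `chain k (al i)` -/
noncomputable def aC (k : ℕ) : ℝ :=
  if Even k then useq (dv M i j) (k+1) else useq (dv M i j) k
noncomputable def bC (k : ℕ) : ℝ :=
  if Even k then useq (dv M i j) k else useq (dv M i j) (k+1)

lemma chain_al_i : ∀ k, chain M i j k (al i) = aC M i j k • al i + bC M i j k • al j
  | 0 => by simp [chain, aC, bC]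
  | (k+1) => by
      rw [chain_succ, Module.End.mul_apply, chain_al_i k]
      unfold cseq aC bC
      by_cases hk : Even k
      · have hk1 : ¬ Even (k+1) := by simp [Nat.even_add_one, hk]
        rw [if_pos hk, if_pos hk, if_pos hk, if_neg hk1, if_neg hk1, sig_j_combo,
          useq_succ_succ]
      · have hk1 : Even (k+1) := by simp [Nat.even_add_one, hk]
        rw [if_neg hk, if_neg hk, if_pos hk1, if_pos hk1, if_neg hk, sig_i_combo,
          useq_succ_succ]

/-- coefficients of `chain k (al j)` -/
noncomputable def vC (k : ℕ) : ℝ :=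
  if Even k then -useq (dv M i j) k
  else useq (dv M i j) (k+1) - 2 * dv M i j * useq (dv M i j) k
noncomputable def wC (k : ℕ) : ℝ :=
  if Even k then useq (dv M i j) (k+1) - 2 * dv M i j * useq (dv M i j) k
  else -useq (dv M i j) k

lemma chain_al_j : ∀ k, chain M i j k (al j) = vC M i j k • al i + wC M i j k • al j
  | 0 => by simp [chain, vC, wC]
  | (k+1) => by
      rw [chain_succ, Module.End.mul_apply, chain_al_j k]
      unfold cseq vC wC
      by_cases hk : Even k
      · have hk1 : ¬ Even (k+1) := by simp [Nat.even_add_one, hk]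
        rw [if_pos hk, if_pos hk, if_pos hk, if_neg hk1, if_neg hk1, sig_j_combo,
          useq_succ_succ]
        module
      · have hk1 : Even (k+1) := by simp [Nat.even_add_one, hk]
        rw [if_neg hk, if_neg hk, if_pos hk1, if_pos hk1, if_neg hk, sig_i_combo,
          useq_succ_succ]
        module

lemma pair_pow_eq_chain : ∀ m : ℕ, (sig M i * sig M j) ^ m = chain M i j (2*m)
  | 0 => by simp [chain]
  | (m+1) => by
      have h2 : 2*(m+1) = (2*m+1)+1 := by ring
      rw [pow_succ', pair_pow_eq_chain m, h2, chain_succ, chain_succ]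
      have c1 : cseq i j (2*m+1) = i := by
        unfold cseq
        rw [if_neg (by simp [Nat.even_add_one, parity_simps])]
      have c2 : cseq i j (2*m) = j := by
        unfold cseq
        rw [if_pos (by simp [parity_simps])]
      rw [c1, c2, mul_assoc]

lemma useq_per (m : ℕ) (hm : 2 ≤ m) :
    useq (dval m) (2*m) = 0 ∧ useq (dval m) (2*m+1) = 1 := by
  have hm0 : (m:ℝ) ≠ 0 := by positivity
  have hθpos : 0 < Real.pi / m := by positivity
  have hθle : Real.pi / m < Real.pi := by
    apply div_lt_self Real.pi_pos
    exact_mod_cast (by omega : 1 < m)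
  have hsin : 0 < Real.sin (Real.pi / m) := Real.sin_pos_of_pos_of_lt_pi hθpos hθle
  have hd : dval m = Real.cos (Real.pi / m) := by
    unfold dval
    rw [if_neg (by omega)]
  constructor
  · have := useq_sin (Real.pi / m) (2*m)
    rw [← hd] at this
    have h2 : ((2*m : ℕ):ℝ) * (Real.pi / m) = 2 * Real.pi := by
      push_cast
      field_simp
    rw [h2] at this
    have : useq (dval m) (2*m) * Real.sin (Real.pi / m) = 0 := by
      rw [this]
      simp [Real.sin_two_pi]
    exact (mul_eq_zero.mp this).resolve_right (ne_of_gt hsin)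
  · have := useq_sin (Real.pi / m) (2*m+1)
    rw [← hd] at this
    have h2 : ((2*m+1 : ℕ):ℝ) * (Real.pi / m) = 2 * Real.pi + Real.pi / m := by
      push_cast
      field_simp
    rw [h2] at this
    have h3 : Real.sin (2 * Real.pi + Real.pi / m) = Real.sin (Real.pi / m) := by
      rw [Real.sin_add]
      simp [Real.sin_two_pi, Real.cos_two_pi]
    rw [h3] at this
    have heq : useq (dval m) (2*m+1) * Real.sin (Real.pi/m) = 1 * Real.sin (Real.pi/m) := by
      rw [this]; ring
    exact mul_right_cancel₀ (ne_of_gt hsin) heq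

lemma dv_sq_lt_one (m : ℕ) (hm : 2 ≤ m) : (dval m)^2 < 1 := by
  have hm0 : (m:ℝ) ≠ 0 := by positivity
  have hθpos : 0 < Real.pi / m := by positivity
  have hθle : Real.pi / m < Real.pi := by
    apply div_lt_self Real.pi_pos
    exact_mod_cast (by omega : 1 < m)
  have hsin : 0 < Real.sin (Real.pi / m) := Real.sin_pos_of_pos_of_lt_pi hθpos hθle
  have hd : dval m = Real.cos (Real.pi / m) := by
    unfold dval; rw [if_neg (by omega)]
  rw [hd]
  nlinarith [Real.sin_sq_add_cos_sq (Real.pi / m)]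

lemma pair_pow_fix_orth (v : V B) (h1 : bform M (al i) v = 0) (h2 : bform M (al j) v = 0) :
    ∀ n, ((sig M i * sig M j) ^ n) v = v
  | 0 => by simp
  | (n+1) => by
      rw [pow_succ', Module.End.mul_apply, pair_pow_fix_orth v h1 h2 n, Module.End.mul_apply,
        sig_apply_orth M j v h2, sig_apply_orth M i v h1]

lemma sig_pair_pow (hij : i ≠ j) : (sig M i * sig M j) ^ (M i j) = 1 := by
  rcases Nat.eq_zero_or_pos (M i j) with h0 | hpos
  · rw [h0, pow_zero]
  have hne1 : M i j ≠ 1 := M.off_diagonal i j hij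
  have hm : 2 ≤ M i j := by omega
  set m := M i j with hmdef
  have hu0 : useq (dval m) (2*m) = 0 := (useq_per m hm).1
  have hu1 : useq (dval m) (2*m+1) = 1 := (useq_per m hm).2
  have hdv : dv M i j = dval m := rfl
  have hxi : ((sig M i * sig M j) ^ m) (al i) = al i := by
    rw [pair_pow_eq_chain, chain_al_i]
    unfold aC bC
    rw [if_pos (by simp [parity_simps]), if_pos (by simp [parity_simps]), hdv, hu0, hu1]
    simp
  have hxj : ((sig M i * sig M j) ^ m) (al j) = al j := by
    rw [pair_pow_eq_chain, chain_al_j]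
    unfold vC wC
    rw [if_pos (by simp [parity_simps]), if_pos (by simp [parity_simps]), hdv, hu0, hu1]
    simp
  have hd2 : 1 - (dval m)^2 ≠ 0 := by
    have := dv_sq_lt_one m hm
    nlinarith
  -- now prove equality of endomorphisms
  apply LinearMap.ext
  intro v
  set d := dval m with hddef
  set ki := bform M (al i) v with hki
  set kj := bform M (al j) v with hkj
  set p := (ki + d * kj)/(1 - d^2) with hp
  set q := (kj + d * ki)/(1 - d^2) with hq
  set w := v - p • al i - q • al j with hw
  have hvw : v = w + p • al i + q • al j := by rw [hw]; module
  have ho1 : bform M (al i) w = 0 := by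
    rw [hw, bform_sub_right, bform_sub_right, bform_smul_right, bform_smul_right,
      bform_self, bform_ij]
    rw [show dv M i j = d from rfl, ← hki, hp, hq]
    field_simp
    ring
  have ho2 : bform M (al j) w = 0 := by
    rw [hw, bform_sub_right, bform_sub_right, bform_smul_right, bform_smul_right,
      bform_self, bform_ji]
    rw [show dv M i j = d from rfl, ← hkj, hp, hq]
    field_simp
    ring
  rw [hvw]
  rw [map_add, map_add, map_smul, map_smul, pair_pow_fix_orth M i j w ho1 ho2, hxi, hxj]
  simp

end Dihedral

lemma sig_liftable : CoxeterMatrix.IsLiftable M (fun b => sig M b) := by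
  intro i i'
  by_cases hii : i = i'
  · subst hii
    rw [M.diagonal i, pow_one]
    apply LinearMap.ext
    intro v
    rw [Module.End.mul_apply, sig_sig]
    rfl
  · exact sig_pair_pow M i i' hii

variable {W : Type*} [Group W] {M} (cs : CoxeterSystem M W)

/-- the geometric representation -/
noncomputable def rho : W →* Module.End ℝ (V B) :=
  cs.lift ⟨fun b => sig M b, sig_liftable M⟩

lemma rho_simple (b : B) : rho cs (cs.simple b) = sig M b :=
  CoxeterSystem.lift_apply_simple cs (sig_liftable M) b

lemma rho_mul_apply (w w' : W) (v : V B) :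
    rho cs (w * w') v = rho cs w (rho cs w' v) := by
  rw [map_mul]; rfl

lemma rho_inv_cancel (w : W) (v : V B) : rho cs w (rho cs w⁻¹ v) = v := by
  rw [← rho_mul_apply, mul_inv_cancel]
  simp

lemma rho_inv_cancel' (w : W) (v : V B) : rho cs w⁻¹ (rho cs w v) = v := by
  rw [← rho_mul_apply, inv_mul_cancel]
  simp

lemma rho_bform (w : W) : ∀ (x y : V B),
    bform M (rho cs w x) (rho cs w y) = bform M x y := by
  induction w using CoxeterSystem.simple_induction cs with
  | simple i =>
      intro x y
      rw [rho_simple]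
      exact bform_sig_sig M i x y
  | one => simp
  | mul w w' hw hw' =>
      intro x y
      rw [rho_mul_apply, rho_mul_apply, hw, hw']

/-! ### Positivity dichotomy -/

/-- coordinatewise nonnegative -/
def PosV (v : V B) : Prop := ∀ b, 0 ≤ v b
/-- coordinatewise nonpositive -/
def NegV (v : V B) : Prop := ∀ b, v b ≤ 0

lemma posV_combo {x y : V B} (hx : PosV x) (hy : PosV y) {a b : ℝ}
    (ha : 0 ≤ a) (hb : 0 ≤ b) : PosV (a • x + b • y) := by
  intro c
  rw [Finsupp.add_apply, Finsupp.smul_apply, Finsupp.smul_apply, smul_eq_mul, smul_eq_mul]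
  have := hx c
  have := hy c
  positivity

lemma posV_al (b : B) : PosV (al b : V B) := by
  classical
  intro c
  unfold al
  rw [Finsupp.single_apply]
  split <;> norm_num

lemma useq_nonneg_of_le (m : ℕ) (hm : 2 ≤ m) (t : ℕ) (ht : t ≤ m) :
    0 ≤ useq (dval m) t := by
  have hm0 : (m:ℝ) ≠ 0 := by positivity
  have hθpos : 0 < Real.pi / m := by positivity
  have hθle : Real.pi / m < Real.pi := by
    apply div_lt_self Real.pi_pos
    exact_mod_cast (by omega : 1 < m)
  have hsin : 0 < Real.sin (Real.pi / m) := Real.sin_pos_of_pos_of_lt_pi hθpos hθle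
  have hd : dval m = Real.cos (Real.pi / m) := by
    unfold dval; rw [if_neg (by omega)]
  have hval := useq_sin (Real.pi / m) t
  rw [← hd] at hval
  have hsin2 : 0 ≤ Real.sin ((t:ℝ) * (Real.pi / m)) := by
    apply Real.sin_nonneg_of_nonneg_of_le_pi
    · positivity
    · calc (t:ℝ) * (Real.pi / m) ≤ (m:ℝ) * (Real.pi / m) := by
            apply mul_le_mul_of_nonneg_right _ (le_of_lt hθpos)
            exact_mod_cast ht
        _ = Real.pi := by field_simp
  nlinarith [hval]

lemma useq_nonneg_zero_case (t : ℕ) : 0 ≤ useq (dval 0) t := by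
  have : dval 0 = 1 := by unfold dval; simp
  rw [this, useq_linear]
  positivity

variable {W : Type*} [Group W] {M : CoxeterMatrix B} (cs : CoxeterSystem M W)

lemma rho_wordProd_alt (i j : B) :
    ∀ k, rho cs (cs.wordProd (CoxeterSystem.alternatingWord i j k)) = chain M i j k
  | 0 => by
      show rho cs (cs.wordProd []) = 1
      rw [CoxeterSystem.wordProd_nil, map_one]
  | (k+1) => by
      rw [CoxeterSystem.alternatingWord_succ', CoxeterSystem.wordProd_cons, map_mul,
        rho_simple, rho_wordProd_alt i j k, chain_succ]
      rfl

lemma not_rightDescent_succ {w : W} {i : B} (h : ¬ cs.IsRightDescent w i) :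
    cs.length (w * cs.simple i) = cs.length w + 1 := by
  rcases cs.length_mul_simple w i with h1 | h1
  · exact h1
  · exfalso; apply h; unfold CoxeterSystem.IsRightDescent; omega

lemma rightDescent_pred {w : W} {i : B} (h : cs.IsRightDescent w i) :
    cs.length (w * cs.simple i) + 1 = cs.length w := by
  rcases cs.length_mul_simple w i with h1 | h1
  · exfalso; unfold CoxeterSystem.IsRightDescent at h; omega
  · exact h1

/-- The main dichotomy theorem: if `i` is not a right descent of `w`,
then `w·αᵢ` is a nonnegative vector. -/
theorem ascent_posV : ∀ n (w : W) (i : B), cs.length w = n → ¬ cs.IsRightDescent w i →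
    PosV (rho cs w (al i)) := by
  intro n
  induction n using Nat.strong_induction_on with
  | _ n IH =>
  intro w i hlen hasc
  rcases Nat.eq_zero_or_pos n with h0 | hpos
  · have : w = 1 := by
      rw [← cs.length_eq_zero_iff]; omega
    subst this
    rw [map_one]
    exact posV_al i
  -- w ≠ 1
  have hw1 : w ≠ 1 := by
    intro h; subst h; rw [cs.length_one] at hlen; omega
  obtain ⟨j, hj⟩ := cs.exists_rightDescent_of_ne_one hw1
  have hij : i ≠ j := by
    intro h; subst h; exact hasc hj
  -- inner peeling induction
  have inner : ∀ (l : ℕ) (w' : W) (k : ℕ), cs.length w' = l →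
      1 ≤ k →
      w = w' * cs.wordProd (CoxeterSystem.alternatingWord i j k) →
      cs.length w' + k = n →
      ¬ cs.IsRightDescent w' (if Even k then i else j) →
      (M i j = 0 ∨ k + 1 ≤ M i j) →
      PosV (rho cs w (al i)) := by
    intro l
    induction l using Nat.strong_induction_on with
    | _ l IHl =>
    intro w' k hl' hk1 hw hln hprev hbound
    set c : B := if Even k then j else i with hc
    by_cases hdesc : cs.IsRightDescent w' c
    case neg =>
      -- both i and j are ascents of w'
      have hasci : ¬ cs.IsRightDescent w' i := by
        by_cases hek : Even k
        · rw [if_pos hek] at hprev; exact hprev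
        · rw [hc, if_neg hek] at hdesc; exact hdesc
      have hascj : ¬ cs.IsRightDescent w' j := by
        by_cases hek : Even k
        · rw [hc, if_pos hek] at hdesc; exact hdesc
        · rw [if_neg hek] at hprev; exact hprev
      have hlt : cs.length w' < n := by omega
      have hposi := IH (cs.length w') hlt w' i rfl hasci
      have hposj := IH (cs.length w') hlt w' j rfl hascj
      -- coefficients nonneg
      have hcoef : 0 ≤ aC M i j k ∧ 0 ≤ bC M i j k := by
        have hnn : ∀ t, t ≤ k + 1 → 0 ≤ useq (dv M i j) t := by
          intro t ht
          rcases hbound with hb0 | hb2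
          · have hdv0 : dv M i j = dval 0 := by unfold dv; rw [hb0]
            rw [hdv0]
            exact useq_nonneg_zero_case t
          · have hm2 : 2 ≤ M i j := by
              have := M.off_diagonal i j hij
              omega
            exact useq_nonneg_of_le (M i j) hm2 t (by omega)
        constructor
        · unfold aC; split
          · exact hnn (k+1) (by omega)
          · exact hnn k (by omega)
        · unfold bC; split
          · exact hnn k (by omega)
          · exact hnn (k+1) (by omega)
      rw [hw, map_mul]
      have : rho cs (cs.wordProd (CoxeterSystem.alternatingWord i j k)) (al i)
          = aC M i j k • al i + bC M i j k • al j := by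
        rw [rho_wordProd_alt, chain_al_i]
      rw [Module.End.mul_apply, this, map_add, map_smul, map_smul]
      exact posV_combo hposi hposj hcoef.1 hcoef.2
    case pos =>
      -- peel one more letter
      have hstep : cs.length (w' * cs.simple c) + 1 = cs.length w' :=
        rightDescent_pred cs hdesc
      have hcons : CoxeterSystem.alternatingWord i j (k+1)
          = c :: CoxeterSystem.alternatingWord i j k := by
        rw [CoxeterSystem.alternatingWord_succ', hc]
      have hw2 : w = (w' * cs.simple c) * cs.wordProd (CoxeterSystem.alternatingWord i j (k+1)) := by
        rw [hcons, CoxeterSystem.wordProd_cons, hw, ← mul_assoc,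
          CoxeterSystem.simple_mul_simple_cancel_right]
      -- rule out k + 1 = M i j
      have hbound' : M i j = 0 ∨ k + 2 ≤ M i j := by
        rcases hbound with hb0 | hb2
        · exact Or.inl hb0
        · right
          by_contra hcon
          have hkm : k + 1 = M i j := by omega
          have hbraid : cs.wordProd (CoxeterSystem.alternatingWord i j (k+1))
              = cs.wordProd (CoxeterSystem.alternatingWord j i (k+1)) := by
            have h := cs.wordProd_braidWord_eq i j
            unfold CoxeterSystem.braidWord at h
            rw [M.symmetric j i] at h
            rw [hkm]
            exact h
          have halt : CoxeterSystem.alternatingWord j i (k+1)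
              = (CoxeterSystem.alternatingWord i j k).concat i :=
            CoxeterSystem.alternatingWord_succ j i k
          have hws : w * cs.simple i
              = (w' * cs.simple c) * cs.wordProd (CoxeterSystem.alternatingWord i j k) := by
            rw [hw2, hbraid, halt, CoxeterSystem.wordProd_concat, mul_assoc,
              CoxeterSystem.simple_mul_simple_cancel_right]
          have hlen1 : cs.length (w * cs.simple i) ≤ n - 1 := by
            rw [hws]
            calc cs.length ((w' * cs.simple c) * cs.wordProd (CoxeterSystem.alternatingWord i j k))
                ≤ cs.length (w' * cs.simple c)
                  + cs.length (cs.wordProd (CoxeterSystem.alternatingWord i j k)) :=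
                  cs.length_mul_le _ _
              _ ≤ cs.length (w' * cs.simple c) + k := by
                  have := cs.length_wordProd_le (CoxeterSystem.alternatingWord i j k)
                  rw [CoxeterSystem.length_alternatingWord] at this
                  omega
              _ ≤ n - 1 := by omega
          have hlen2 : cs.length (w * cs.simple i) = n + 1 := by
            have := not_rightDescent_succ cs hasc
            omega
          omega
      -- recurse
      apply IHl (cs.length (w' * cs.simple c)) (by omega) (w' * cs.simple c) (k+1) rfl
        (by omega) hw2 (by omega) _ hbound'
      -- new ascent invariant
      have : (if Even (k+1) then i else j) = c := by
        rcases Nat.even_or_odd k with he | ho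
        · rw [if_neg (by simp [Nat.even_add_one, he]), hc, if_pos he]
        · rw [if_pos (by simp [Nat.even_add_one, Nat.not_even_iff_odd.mpr ho]), hc,
            if_neg (Nat.not_even_iff_odd.mpr ho)]
      rw [this]
      intro hcon
      unfold CoxeterSystem.IsRightDescent at hcon
      rw [CoxeterSystem.simple_mul_simple_cancel_right] at hcon
      omega
  -- apply inner with w' = w * s j, k = 1
  apply inner (cs.length (w * cs.simple j)) (w * cs.simple j) 1 rfl le_rfl
  · rw [show CoxeterSystem.alternatingWord i j 1 = [j] from rfl,
      CoxeterSystem.wordProd_singleton, CoxeterSystem.simple_mul_simple_cancel_right]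
  · have := rightDescent_pred cs hj
    omega
  · rw [if_neg (by norm_num)]
    intro hcon
    unfold CoxeterSystem.IsRightDescent at hcon
    rw [CoxeterSystem.simple_mul_simple_cancel_right] at hcon
    have := rightDescent_pred cs hj
    omega
  · have := M.off_diagonal i j hij
    omega


/-! ### Roots -/

variable {cs}

def IsRoot (v : V B) : Prop := ∃ w c, v = rho cs w (al c)

def IsPosRoot (cs : CoxeterSystem M W) (v : V B) : Prop := @IsRoot _ _ _ _ cs v ∧ PosV v

variable (cs)

lemma descent_negV {w : W} {i : B} (h : cs.IsRightDescent w i) :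
    NegV (rho cs w (al i)) := by
  have hcancel : w * cs.simple i * cs.simple i = w :=
    CoxeterSystem.simple_mul_simple_cancel_right cs i
  have h2 : ¬ cs.IsRightDescent (w * cs.simple i) i := by
    unfold CoxeterSystem.IsRightDescent at *
    rw [hcancel]
    omega
  have hpos := ascent_posV cs (cs.length (w * cs.simple i)) (w * cs.simple i) i rfl h2
  have heq : rho cs w (al i) = - rho cs (w * cs.simple i) (al i) := by
    conv_lhs => rw [← hcancel]
    rw [rho_mul_apply, rho_simple, sig_al_self, map_neg]
  rw [heq]
  intro b
  rw [Finsupp.neg_apply]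
  have := hpos b
  linarith

lemma ascent_posV' {w : W} {i : B} (h : ¬ cs.IsRightDescent w i) :
    PosV (rho cs w (al i)) := ascent_posV cs (cs.length w) w i rfl h

lemma root_rho {v : V B} (h : @IsRoot _ _ _ _ cs v) (w : W) : @IsRoot _ _ _ _ cs (rho cs w v) := by
  obtain ⟨y, c, rfl⟩ := h
  exact ⟨w * y, c, by rw [rho_mul_apply]⟩

lemma root_ne_zero {v : V B} (h : @IsRoot _ _ _ _ cs v) : v ≠ 0 := by
  obtain ⟨w, c, rfl⟩ := h
  intro hv
  have h1 : rho cs w⁻¹ (rho cs w (al c)) = al c := rho_inv_cancel' cs w (al c)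
  rw [hv, map_zero] at h1
  have : (0 : ℝ) = 1 := by
    have := congrFun (congrArg (fun f : V B => (f : B → ℝ)) h1) c
    unfold al at this
    simpa [Finsupp.single_apply] using this.symm
  norm_num at this

lemma root_neg {v : V B} (h : @IsRoot _ _ _ _ cs v) : @IsRoot _ _ _ _ cs (-v) := by
  obtain ⟨w, c, rfl⟩ := h
  refine ⟨w * cs.simple c, c, ?_⟩
  rw [rho_mul_apply, rho_simple, sig_al_self, map_neg]

lemma root_dichotomy {v : V B} (h : @IsRoot _ _ _ _ cs v) : PosV v ∨ NegV v := by
  obtain ⟨w, c, rfl⟩ := h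
  by_cases hd : cs.IsRightDescent w c
  · exact Or.inr (descent_negV cs hd)
  · exact Or.inl (ascent_posV' cs hd)

lemma bform_root_self {v : V B} (h : @IsRoot _ _ _ _ cs v) : bform M v v = 1 := by
  obtain ⟨w, c, rfl⟩ := h
  rw [rho_bform, bform_self]

/-! ### Finiteness of inversion root sets -/

def invRootSet (y : W) : Set (V B) := {v | IsPosRoot cs v ∧ NegV (rho cs y v)}

lemma posV_negV_zero {v : V B} (h1 : PosV v) (h2 : NegV v) : v = 0 := by
  ext b
  have := h1 b
  have := h2 b
  simp only [Finsupp.coe_zero, Pi.zero_apply]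
  linarith

lemma root_single_case {γ : V B} (hroot : @IsRoot _ _ _ _ cs γ) (hpos : PosV γ) {b : B}
    (hneg : NegV (sig M b γ)) : γ = al b := by
  classical
  have hcoord : ∀ b', b' ≠ b → γ b' = 0 := by
    intro b' hb'
    have h1 : (sig M b γ) b' = γ b' := by
      rw [sig_apply, Finsupp.sub_apply, Finsupp.smul_apply]
      unfold al
      rw [Finsupp.single_apply, if_neg (Ne.symm hb')]
      simp
    have h2 := hneg b'
    have h3 := hpos b'
    rw [h1] at h2
    linarith
  have hγeq : γ = (γ b) • al b := by
    ext b'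
    rw [Finsupp.smul_apply]
    unfold al
    rw [Finsupp.single_apply]
    by_cases hb' : b = b'
    · subst hb'; simp
    · rw [if_neg hb', hcoord b' (Ne.symm hb')]
      simp
  have hγb : γ b = 1 := by
    have hn := bform_root_self cs hroot
    rw [hγeq, bform_smul_left, bform_smul_right, bform_self] at hn
    have h4 : γ b = 1 ∨ γ b = -1 := by
      have h2 : (γ b - 1) * (γ b + 1) = 0 := by nlinarith
      rcases mul_eq_zero.mp h2 with h | h
      · left; linarith
      · right; linarith
    rcases h4 with h | h
    · exact h
    · exfalso
      have := hpos b
      rw [h] at this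
      linarith
  rw [hγeq, hγb, one_smul]

lemma invRootSet_finite : ∀ n (y : W), cs.length y = n → (invRootSet cs y).Finite := by
  intro n
  induction n using Nat.strong_induction_on with
  | _ n IH =>
  intro y hlen
  rcases Nat.eq_zero_or_pos n with h0 | hpos
  · have hy : y = 1 := by rw [← cs.length_eq_zero_iff]; omega
    subst hy
    have : invRootSet cs 1 = ∅ := by
      ext v
      simp only [invRootSet, Set.mem_setOf_eq, Set.mem_empty_iff_false, iff_false, not_and]
      intro hroot hneg
      rw [map_one] at hneg
      exact (root_ne_zero cs hroot.1) (posV_negV_zero hroot.2 hneg)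
    rw [this]
    exact Set.finite_empty
  have hy1 : y ≠ 1 := by
    intro h; subst h; rw [cs.length_one] at hlen; omega
  obtain ⟨b, hb⟩ := cs.exists_leftDescent_of_ne_one hy1
  set y' := cs.simple b * y with hy'
  have hcancel : cs.simple b * y' = y := by
    rw [hy', CoxeterSystem.simple_mul_simple_cancel_left]
  have hlen' : cs.length y' + 1 = n := by
    unfold CoxeterSystem.IsLeftDescent at hb
    have h1 := cs.length_simple_mul y b
    rw [← hy'] at h1 hb
    rcases h1 with h1 | h1 <;> omega
  have hsub : invRootSet cs y ⊆ invRootSet cs y' ∪ {rho cs y'⁻¹ (al b)} := by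
    intro v ⟨hroot, hneg⟩
    by_cases hcase : NegV (rho cs y' v)
    · exact Or.inl ⟨hroot, hcase⟩
    · right
      have hγroot : @IsRoot _ _ _ _ cs (rho cs y' v) := by
        obtain ⟨w, c, rfl⟩ := hroot.1
        exact ⟨y' * w, c, (rho_mul_apply cs y' w (al c)).symm⟩
      have hγpos : PosV (rho cs y' v) := (root_dichotomy cs hγroot).resolve_right hcase
      have hsb : NegV (sig M b (rho cs y' v)) := by
        have heq : rho cs y v = sig M b (rho cs y' v) := by
          conv_lhs => rw [← hcancel]
          rw [rho_mul_apply, rho_simple]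
        rwa [heq] at hneg
      have hal : rho cs y' v = al b :=
        root_single_case cs hγroot hγpos hsb
      have hv : v = rho cs y'⁻¹ (al b) := by
        rw [← hal, rho_inv_cancel']
      simp [hv]
  apply Set.Finite.subset _ hsub
  apply Set.Finite.union
  · exact IH (cs.length y') (by omega) y' rfl
  · exact Set.finite_singleton _

/-! ### Standard parabolic subgroups -/

lemma rho_coords_of_mem_closure (K : Set B) (u : W)
    (hu : u ∈ Subgroup.closure (cs.simple '' K)) :
    ∀ (v : V B) (b : B), b ∉ K → (rho cs u v) b = v b := by
  classical
  induction hu using Subgroup.closure_induction with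
  | mem x hx =>
      obtain ⟨c, hc, rfl⟩ := hx
      intro v b hb
      rw [rho_simple, sig_apply, Finsupp.sub_apply, Finsupp.smul_apply]
      unfold al
      rw [Finsupp.single_apply, if_neg (by rintro rfl; exact hb hc)]
      simp
  | one => intro v b _; rw [map_one]; rfl
  | mul x y _ _ hx hy =>
      intro v b hb
      rw [rho_mul_apply, hx _ _ hb, hy _ _ hb]
  | inv x _ hx =>
      intro v b hb
      have := hx (rho cs x⁻¹ v) b hb
      rw [rho_inv_cancel] at this
      exact this.symm

lemma descent_mem_of_mem_closure (K : Set B) (u : W)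
    (hu : u ∈ Subgroup.closure (cs.simple '' K)) (b : B)
    (h : cs.IsRightDescent u b) : b ∈ K := by
  classical
  by_contra hb
  have hneg := descent_negV cs h
  have := hneg b
  rw [rho_coords_of_mem_closure cs K u hu (al b) b hb] at this
  unfold al at this
  rw [Finsupp.single_apply, if_pos rfl] at this
  linarith

lemma exists_word_in_K (K : Set B) : ∀ n (u : W), cs.length u = n →
    u ∈ Subgroup.closure (cs.simple '' K) →
    ∃ ω : List B, (∀ x ∈ ω, x ∈ K) ∧ ω.length = n ∧ u = cs.wordProd ω := by
  intro n
  induction n using Nat.strong_induction_on with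
  | _ n IH =>
  intro u hlen hu
  rcases Nat.eq_zero_or_pos n with h0 | hpos
  · refine ⟨[], by simp, by simp [h0], ?_⟩
    rw [CoxeterSystem.wordProd_nil]
    rw [← cs.length_eq_zero_iff]; omega
  have hu1 : u ≠ 1 := by
    intro h; subst h; rw [cs.length_one] at hlen; omega
  obtain ⟨b, hb⟩ := cs.exists_rightDescent_of_ne_one hu1
  have hbK : b ∈ K := descent_mem_of_mem_closure cs K u hu b hb
  have hsbmem : cs.simple b ∈ Subgroup.closure (cs.simple '' K) :=
    Subgroup.subset_closure ⟨b, hbK, rfl⟩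
  have hu' : u * cs.simple b ∈ Subgroup.closure (cs.simple '' K) :=
    Subgroup.mul_mem _ hu hsbmem
  have hlen' : cs.length (u * cs.simple b) + 1 = n := by
    have := rightDescent_pred cs hb
    omega
  obtain ⟨ω, hω1, hω2, hω3⟩ := IH (cs.length (u * cs.simple b)) (by omega) _ rfl hu'
  refine ⟨ω.concat b, ?_, by simp [hω2]; omega, ?_⟩
  · intro x hx
    rw [List.concat_eq_append, List.mem_append] at hx
    rcases hx with hx | hx
    · exact hω1 x hx
    · rw [List.mem_singleton] at hx; subst hx; exact hbK
  · rw [CoxeterSystem.wordProd_concat, ← hω3]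
    exact (cs.simple_mul_simple_cancel_right b).symm


/-! ### Reflections and functionals -/

lemma rho_reflection (w : W) (c : B) (v : V B) :
    rho cs (w * cs.simple c * w⁻¹) v
      = v - (2 * bform M (rho cs w (al c)) v) • rho cs w (al c) := by
  rw [rho_mul_apply, rho_mul_apply, rho_simple, sig_apply, map_sub, map_smul, rho_inv_cancel]
  congr 2
  have h := rho_bform cs w (al c) (rho cs w⁻¹ v)
  rw [rho_inv_cancel] at h
  rw [h]

lemma rho_eq_one_iff (w : W) (h : ∀ v, rho cs w v = v) : w = 1 := by
  classical
  by_contra hw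
  obtain ⟨b, hb⟩ := cs.exists_rightDescent_of_ne_one hw
  have hneg := descent_negV cs hb
  have h1 := hneg b
  rw [h (al b)] at h1
  unfold al at h1
  rw [Finsupp.single_apply, if_pos rfl] at h1
  linarith

/-- a fixed functional -/
def FixedF (p : V B →ₗ[ℝ] ℝ) (w : W) : Prop := ∀ v, p (rho cs w v) = p v

lemma fixedF_mul {p : V B →ₗ[ℝ] ℝ} {x y : W} (hx : FixedF cs p x) (hy : FixedF cs p y) :
    FixedF cs p (x * y) := by
  intro v
  rw [rho_mul_apply, hx, hy]

lemma fixedF_simple_of_zero {p : V B →ₗ[ℝ] ℝ} {b : B} (h : p (al b) = 0) :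
    FixedF cs p (cs.simple b) := by
  intro v
  rw [rho_simple, sig_apply, map_sub, map_smul, h]
  simp

lemma fixedF_of_mem_closure {p : V B →ₗ[ℝ] ℝ} {K : Set B}
    (hK : ∀ b ∈ K, p (al b) = 0) {u : W}
    (hu : u ∈ Subgroup.closure (cs.simple '' K)) : FixedF cs p u := by
  induction hu using Subgroup.closure_induction with
  | mem x hx =>
      obtain ⟨c, hc, rfl⟩ := hx
      exact fixedF_simple_of_zero cs (hK c hc)
  | one => intro v; rw [map_one]; rfl
  | mul x y _ _ hx hy => exact fixedF_mul cs hx hy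
  | inv x _ hx =>
      intro v
      have := hx (rho cs x⁻¹ v)
      rw [rho_inv_cancel] at this
      exact this.symm

/-- every reflection has a positive root with the standard formula -/
lemma reflection_posroot {t : W} (ht : cs.IsReflection t) :
    ∃ β : V B, IsPosRoot cs β ∧ ∀ v, rho cs t v = v - (2 * bform M β v) • β := by
  obtain ⟨w, c, rfl⟩ := ht
  have hform := rho_reflection cs w c
  set β₀ := rho cs w (al c) with hβ₀
  have hroot : @IsRoot _ _ _ _ cs β₀ := ⟨w, c, rfl⟩
  rcases root_dichotomy cs hroot with hp | hn
  · exact ⟨β₀, ⟨hroot, hp⟩, hform⟩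
  · refine ⟨-β₀, ⟨root_neg cs hroot, ?_⟩, ?_⟩
    · intro b; rw [Finsupp.neg_apply]; have := hn b; linarith
    · intro v
      rw [hform v, bform_neg_left]
      module

lemma reflection_sq {t : W} (ht : cs.IsReflection t) : t * t = 1 := by
  obtain ⟨w, c, rfl⟩ := ht
  rw [show (w * cs.simple c * w⁻¹) * (w * cs.simple c * w⁻¹)
      = w * (cs.simple c * cs.simple c) * w⁻¹ by group]
  rw [cs.simple_mul_simple_self c]
  group

lemma reflection_formula_inj {t t' : W} (ht : cs.IsReflection t) (ht' : cs.IsReflection t')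
    {β : V B} (hβ : bform M β β = 1)
    (h1 : ∀ v, rho cs t v = v - (2 * bform M β v) • β)
    (h2 : ∀ v, rho cs t' v = v - (2 * bform M β v) • β) : t = t' := by
  have hmul : t * t' = 1 := by
    apply rho_eq_one_iff cs
    intro v
    rw [rho_mul_apply, h2, h1, bform_sub_right, bform_smul_right, hβ]
    module
  have := reflection_sq cs ht'
  calc t = t * (t' * t') := by rw [this, mul_one]
    _ = (t * t') * t' := by group
    _ = t' := by rw [hmul, one_mul]

lemma reflection_fix_root_zero {t : W} (ht : cs.IsReflection t) {β : V B}
    (hform : ∀ v, rho cs t v = v - (2 * bform M β v) • β) (hβ : bform M β β = 1)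
    {p : V B →ₗ[ℝ] ℝ} (hfix : FixedF cs p t) : p β = 0 := by
  have h1 := hfix β
  rw [hform β, hβ] at h1
  rw [map_sub, map_smul] at h1
  simp only [smul_eq_mul] at h1
  linarith

lemma simple_inj {b b' : B} (h : cs.simple b = cs.simple b') : b = b' := by
  classical
  by_contra hbb
  have h1 : rho cs (cs.simple b) (al b) = rho cs (cs.simple b') (al b) := by rw [h]
  rw [rho_simple, rho_simple, sig_al_self, sig_apply] at h1
  have h2 := congrFun (congrArg (fun f : V B => (f : B → ℝ)) h1) b
  simp only [Finsupp.coe_neg, Pi.neg_apply, Finsupp.coe_sub, Pi.sub_apply,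
    Finsupp.coe_smul, Pi.smul_apply, smul_eq_mul] at h2
  unfold al at h2
  rw [Finsupp.single_apply, if_pos rfl, Finsupp.single_apply, if_neg (Ne.symm hbb)] at h2
  norm_num at h2

/-- lists with entries in a finite set and bounded length form a finite set -/
lemma listset_finite {X : Type*} {K : Set X} (hK : K.Finite) :
    ∀ N, {ω : List X | (∀ x ∈ ω, x ∈ K) ∧ ω.length ≤ N}.Finite := by
  intro N
  induction N with
  | zero =>
      apply Set.Finite.subset (Set.finite_singleton ([] : List X))
      rintro ω ⟨-, hlen⟩
      simp only [Nat.le_zero, List.length_eq_zero_iff] at hlen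
      simp [hlen]
  | succ N IHN =>
      apply Set.Finite.subset
        (Set.Finite.union (Set.finite_singleton ([] : List X))
          (Set.Finite.image (fun q : X × List X => q.1 :: q.2) (hK.prod IHN)))
      rintro ω ⟨hmem, hlen⟩
      cases ω with
      | nil => simp
      | cons x l =>
          right
          refine ⟨⟨x, l⟩, ⟨hmem x (by simp), ⟨?_, ?_⟩⟩, rfl⟩
          · intro y hy; exact hmem y (by simp [hy])
          · simpa using hlen

lemma nodup_length_le {X : Type*} [DecidableEq X] {l : List X} (hn : l.Nodup) {S : Set X}
    (hS : S.Finite) (hsub : ∀ x ∈ l, x ∈ S) : l.length ≤ hS.toFinset.card := by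
  rw [← List.toFinset_card_of_nodup hn]
  apply Finset.card_le_card
  intro x hx
  rw [List.mem_toFinset] at hx
  rw [Set.Finite.mem_toFinset]
  exact hsub x hx

lemma wordProd_mem_closure {K : Set B} {ω : List B} (h : ∀ x ∈ ω, x ∈ K) :
    cs.wordProd ω ∈ Subgroup.closure (cs.simple '' K) := by
  induction ω with
  | nil => rw [CoxeterSystem.wordProd_nil]; exact Subgroup.one_mem _
  | cons c l IHl =>
      rw [CoxeterSystem.wordProd_cons]
      apply Subgroup.mul_mem
      · exact Subgroup.subset_closure ⟨c, h c (by simp), rfl⟩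
      · exact IHl (fun x hx => h x (by simp [hx]))

lemma ris_mem_closure {K : Set B} : ∀ (ω : List B), (∀ x ∈ ω, x ∈ K) →
    ∀ t ∈ cs.rightInvSeq ω, t ∈ Subgroup.closure (cs.simple '' K) ∧ cs.IsReflection t := by
  intro ω
  induction ω with
  | nil => intro _ t ht; simp [CoxeterSystem.rightInvSeq] at ht
  | cons c l IHl =>
      intro hmem t ht
      rw [show cs.rightInvSeq (c :: l)
          = ((cs.wordProd l)⁻¹ * (cs.simple c) * (cs.wordProd l)) :: cs.rightInvSeq l from rfl]
        at ht
      rcases List.mem_cons.mp ht with h | h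
      · subst h
        constructor
        · have h1 : cs.wordProd l ∈ Subgroup.closure (cs.simple '' K) :=
            wordProd_mem_closure cs (fun x hx => hmem x (by simp [hx]))
          have h2 : cs.simple c ∈ Subgroup.closure (cs.simple '' K) :=
            Subgroup.subset_closure ⟨c, hmem c (by simp), rfl⟩
          exact Subgroup.mul_mem _ (Subgroup.mul_mem _ (Subgroup.inv_mem _ h1) h2) h1
        · exact ⟨(cs.wordProd l)⁻¹, c, by group⟩
      · exact IHl (fun x hx => hmem x (by simp [hx])) t h


/-! ### Finiteness of parabolic subgroups with few zero roots -/

theorem parabolic_finite (p : V B →ₗ[ℝ] ℝ)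
    (hz : {β : V B | IsPosRoot cs β ∧ p β = 0}.Finite) :
    Finite ↥(Subgroup.closure (cs.simple '' {b | p (al b) = 0})) := by
  classical
  set K : Set B := {b | p (al b) = 0} with hKdef
  set G := Subgroup.closure (cs.simple '' K) with hGdef
  have hfix : ∀ u ∈ G, FixedF cs p u := fun u hu =>
    fixedF_of_mem_closure cs (fun b hb => hb) hu
  set T : Set W := {t | cs.IsReflection t ∧ t ∈ G} with hTdef
  have key : ∀ t ∈ T, ∃ β, (IsPosRoot cs β ∧ p β = 0)
      ∧ (∀ v, rho cs t v = v - (2 * bform M β v) • β) := by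
    intro t ht
    obtain ⟨β, hβroot, hform⟩ := reflection_posroot cs ht.1
    have hb1 : bform M β β = 1 := bform_root_self cs hβroot.1
    have hz0 : p β = 0 := reflection_fix_root_zero cs ht.1 hform hb1 (hfix t ht.2)
    exact ⟨β, ⟨hβroot, hz0⟩, hform⟩
  have hsub0 : ∀ β ∈ {β : V B | IsPosRoot cs β ∧ p β = 0},
      ({t : W | cs.IsReflection t ∧ ∀ v, rho cs t v = v - (2 * bform M β v) • β}).Finite := by
    intro β hβ
    apply Set.Subsingleton.finite
    intro t1 h1 t2 h2
    exact reflection_formula_inj cs h1.1 h2.1 (bform_root_self cs hβ.1.1) h1.2 h2.2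
  have hT : T.Finite := by
    apply Set.Finite.subset (Set.Finite.biUnion hz hsub0)
    intro t ht
    obtain ⟨β, hβ1, hβ2⟩ := key t ht
    exact Set.mem_biUnion hβ1 ⟨ht.1, hβ2⟩
  -- K is finite
  have hK : K.Finite := by
    apply Set.Finite.of_finite_image (f := fun b => cs.simple b)
    · apply Set.Finite.subset hT
      rintro x ⟨b, hb, rfl⟩
      exact ⟨cs.isReflection_simple b, Subgroup.subset_closure ⟨b, hb, rfl⟩⟩
    · intro b1 _ b2 _ h
      exact simple_inj cs h
  -- length bound
  set N := hT.toFinset.card with hN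
  have hbound : ∀ u ∈ G, cs.length u ≤ N := by
    intro u hu
    obtain ⟨ω, hω1, hω2, hω3⟩ := exists_word_in_K cs K (cs.length u) u rfl hu
    have hred : cs.IsReduced ω := by
      unfold CoxeterSystem.IsReduced
      rw [← hω3, hω2]
    have hnd : (cs.rightInvSeq ω).Nodup := hred.nodup_rightInvSeq
    have hmem : ∀ t ∈ cs.rightInvSeq ω, t ∈ T := by
      intro t ht
      have := ris_mem_closure cs ω hω1 t ht
      exact ⟨this.2, this.1⟩
    have hlen : (cs.rightInvSeq ω).length = ω.length := cs.length_rightInvSeq ω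
    have := nodup_length_le hnd hT hmem
    omega
  -- conclude
  have hGfin : (G : Set W).Finite := by
    apply Set.Finite.subset ((listset_finite hK N).image cs.wordProd)
    intro u hu
    obtain ⟨ω, hω1, hω2, hω3⟩ := exists_word_in_K cs K (cs.length u) u rfl hu
    refine ⟨ω, ⟨hω1, ?_⟩, hω3.symm⟩
    rw [hω2]
    exact hbound u hu
  exact hGfin.to_subtype

/-! ### Dominant stabilizer theorem -/

def Dominant (p : V B →ₗ[ℝ] ℝ) : Prop := ∀ β, IsPosRoot cs β → 0 ≤ p β

theorem stab_dominant (p : V B →ₗ[ℝ] ℝ) (hdom : Dominant cs p) :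
    ∀ n (w : W), cs.length w = n → FixedF cs p w →
    w ∈ Subgroup.closure (cs.simple '' {b | p (al b) = 0}) := by
  intro n
  induction n using Nat.strong_induction_on with
  | _ n IH =>
  intro w hlen hfix
  rcases Nat.eq_zero_or_pos n with h0 | hpos
  · have : w = 1 := by rw [← cs.length_eq_zero_iff]; omega
    subst this
    exact Subgroup.one_mem _
  have hw1 : w ≠ 1 := by
    intro h; subst h; rw [cs.length_one] at hlen; omega
  obtain ⟨b, hb⟩ := cs.exists_leftDescent_of_ne_one hw1
  have hbdesc : cs.IsRightDescent w⁻¹ b := cs.isRightDescent_inv_iff.mpr hb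
  have hneg : NegV (rho cs w⁻¹ (al b)) := descent_negV cs hbdesc
  have hroot : @IsRoot _ _ _ _ cs (rho cs w⁻¹ (al b)) := ⟨w⁻¹, b, rfl⟩
  have hnegroot : IsPosRoot cs (-(rho cs w⁻¹ (al b))) := by
    refine ⟨root_neg cs hroot, ?_⟩
    intro c
    rw [Finsupp.neg_apply]
    have := hneg c
    linarith
  have halb : p (al b) = p (rho cs w⁻¹ (al b)) := by
    have := hfix (rho cs w⁻¹ (al b))
    rw [rho_inv_cancel] at this
    exact this
  have hpb0 : p (al b) = 0 := by
    have h1 : 0 ≤ p (-(rho cs w⁻¹ (al b))) := hdom _ hnegroot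
    rw [map_neg] at h1
    have h2 : 0 ≤ p (al b) := by
      apply hdom
      exact ⟨⟨1, b, by rw [map_one]; rfl⟩, posV_al b⟩
    rw [halb] at h2 ⊢
    linarith
  have hfix' : FixedF cs p (cs.simple b * w) := by
    intro v
    rw [rho_mul_apply]
    rw [fixedF_simple_of_zero cs hpb0 (rho cs w v)]
    exact hfix v
  have hlen' : cs.length (cs.simple b * w) < n := by
    unfold CoxeterSystem.IsLeftDescent at hb
    omega
  have hmem := IH (cs.length (cs.simple b * w)) (by omega) (cs.simple b * w) rfl hfix'
  have hsb : cs.simple b ∈ Subgroup.closure (cs.simple '' {b | p (al b) = 0}) :=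
    Subgroup.subset_closure ⟨b, hpb0, rfl⟩
  have := Subgroup.mul_mem _ hsb hmem
  rwa [cs.simple_mul_simple_cancel_left] at this


/-! ### Evaluation lemmas and the functional fI -/

lemma single_eq_smul_al (b : B) (c : ℝ) : Finsupp.single b c = c • al b := by
  unfold al
  rw [Finsupp.smul_single, smul_eq_mul, mul_one]

lemma lin_eval (p : V B →ₗ[ℝ] ℝ) (v : V B) :
    p v = v.sum fun b c => c * p (al b) := by
  conv_lhs => rw [← Finsupp.sum_single v]
  rw [map_finsuppSum]
  apply Finsupp.sum_congr
  intro b _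
  rw [single_eq_smul_al, map_smul, smul_eq_mul]

lemma lin_eval_zero (p : V B →ₗ[ℝ] ℝ) (I : Set B) (hpI : ∀ i ∈ I, p (al i) = 0)
    (v : V B) (hv : ∀ b ∉ I, v b = 0) : p v = 0 := by
  classical
  rw [lin_eval]
  apply Finset.sum_eq_zero
  intro b hb
  show v b * p (al b) = 0
  by_cases hbI : b ∈ I
  · rw [hpI b hbI, mul_zero]
  · rw [hv b hbI, zero_mul]

open scoped Classical in
/-- the functional which sums the coordinates outside I -/
noncomputable def fI (I : Set B) : V B →ₗ[ℝ] ℝ where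
  toFun v := v.sum fun b c => if b ∈ I then 0 else c
  map_add' x y :=
    Finsupp.sum_add_index' (fun b => by split <;> rfl) (fun b c1 c2 => by split <;> simp)
  map_smul' r x := by
    rw [Finsupp.sum_smul_index (fun b => by split <;> simp)]
    simp only [RingHom.id_apply, smul_eq_mul]
    rw [Finsupp.mul_sum]
    apply Finsupp.sum_congr
    intro b _
    split <;> simp

open scoped Classical in
lemma fI_apply (I : Set B) (v : V B) :
    fI I v = v.sum fun b c => if b ∈ I then 0 else c := rfl

open scoped Classical in
lemma fI_al (I : Set B) (b : B) : fI I (al b) = if b ∈ I then 0 else 1 := by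
  rw [fI_apply]
  unfold al
  rw [Finsupp.sum_single_index]
  split <;> rfl

lemma fI_al_mem {I : Set B} {b : B} (hb : b ∈ I) : fI I (al b) = 0 := by
  rw [fI_al, if_pos hb]

lemma fI_nonneg (I : Set B) {v : V B} (hv : PosV v) : 0 ≤ fI I v := by
  classical
  rw [fI_apply]
  apply Finset.sum_nonneg
  intro b _
  show (0:ℝ) ≤ if b ∈ I then 0 else v b
  split
  · rfl
  · exact hv b

lemma fI_pos (I : Set B) {v : V B} (hv : PosV v) {b₀ : B} (hb₀ : b₀ ∉ I)
    (hvb : v b₀ ≠ 0) : 0 < fI I v := by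
  classical
  rw [fI_apply]
  have hmem : b₀ ∈ v.support := Finsupp.mem_support_iff.mpr hvb
  have hterm : (0:ℝ) < if b₀ ∈ I then 0 else v b₀ := by
    rw [if_neg hb₀]
    rcases lt_or_eq_of_le (hv b₀) with h | h
    · exact h
    · exact absurd h.symm hvb
  calc (0:ℝ) < if b₀ ∈ I then 0 else v b₀ := hterm
    _ ≤ _ := by
        apply Finset.single_le_sum (f := fun b => if b ∈ I then 0 else v b) _ hmem
        intro b _
        show (0:ℝ) ≤ if b ∈ I then 0 else v b
        split
        · rfl
        · exact hv b

lemma fI_eq_zero_coords (I : Set B) {v : V B} (hv : PosV v) (h : fI I v = 0) :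
    ∀ b ∉ I, v b = 0 := by
  intro b hb
  by_contra hvb
  have := fI_pos I hv hb hvb
  rw [h] at this
  exact lt_irrefl _ this

/-! ### Finiteness of I-supported positive roots -/

lemma rho_eval (w : W) (v : V B) :
    rho cs w v = v.sum fun b c => c • rho cs w (al b) := by
  conv_lhs => rw [← Finsupp.sum_single v]
  rw [map_finsuppSum]
  apply Finsupp.sum_congr
  intro b _
  rw [single_eq_smul_al, map_smul]

theorem phiI_finite (I : Set B) (hIfin : Finite ↥(Subgroup.closure (cs.simple '' I))) :
    {β : V B | IsPosRoot cs β ∧ ∀ b ∉ I, β b = 0}.Finite := by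
  classical
  set G := Subgroup.closure (cs.simple '' I) with hG
  have hGset : (G : Set W).Finite := Set.toFinite _
  have hne : (G : Set W).Nonempty := ⟨1, Subgroup.one_mem _⟩
  obtain ⟨w₀, hw₀G, hw₀max⟩ := Set.Finite.exists_maximalFor cs.length (G : Set W) hGset hne
  have hdesc : ∀ i ∈ I, cs.IsRightDescent w₀ i := by
    intro i hi
    have hmem : w₀ * cs.simple i ∈ G :=
      Subgroup.mul_mem _ hw₀G (Subgroup.subset_closure ⟨i, hi, rfl⟩)
    rcases cs.length_mul_simple w₀ i with h1 | h1
    · exfalso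
      have := hw₀max hmem (by omega)
      omega
    · unfold CoxeterSystem.IsRightDescent
      omega
  have hneg : ∀ i ∈ I, NegV (rho cs w₀ (al i)) := fun i hi => descent_negV cs (hdesc i hi)
  apply Set.Finite.subset (invRootSet_finite cs (cs.length w₀) w₀ rfl)
  rintro β ⟨hroot, hsupp⟩
  refine ⟨hroot, ?_⟩
  intro b'
  rw [rho_eval, Finsupp.sum_apply]
  apply Finset.sum_nonpos
  intro b hb
  show (β b • rho cs w₀ (al b)) b' ≤ 0
  rw [Finsupp.smul_apply, smul_eq_mul]
  by_cases hbI : b ∈ I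
  · have h1 := hroot.2 b
    have h2 := hneg b hbI b'
    nlinarith
  · rw [hsupp b hbI, zero_mul]


/-! ### The key dominance proposition -/

theorem prop_R (I : Set B)
    (hIfin : Finite ↥(Subgroup.closure (cs.simple '' I)))
    (hmax : ∀ J : Set B, I ⊂ J → Infinite ↥(Subgroup.closure (cs.simple '' J)))
    (p : V B →ₗ[ℝ] ℝ)
    (hneg : {β : V B | IsPosRoot cs β ∧ p β < 0}.Finite)
    (hpI : ∀ i ∈ I, p (al i) = 0) :
    Dominant cs p := by
  classical
  by_contra hcon
  unfold Dominant at hcon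
  push_neg at hcon
  obtain ⟨β₀, hβ₀root, hβ₀neg⟩ := hcon
  have hfpos : ∀ β : V B, IsPosRoot cs β → p β < 0 → 0 < fI I β := by
    intro β hroot hplt
    by_contra hle
    push_neg at hle
    have h0 : fI I β = 0 := le_antisymm hle (fI_nonneg I hroot.2)
    have := lin_eval_zero p I hpI β (fI_eq_zero_coords I hroot.2 h0)
    linarith
  set S := hneg.toFinset with hS
  have hSne : S.Nonempty := ⟨β₀, by rw [Set.Finite.mem_toFinset]; exact ⟨hβ₀root, by linarith⟩⟩
  obtain ⟨βs, hβsS, hβsmin⟩ := S.exists_min_image (fun β => fI I β / (-(p β))) hSne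
  rw [Set.Finite.mem_toFinset] at hβsS
  obtain ⟨hβsroot, hβsneg⟩ := hβsS
  have hfβs : 0 < fI I βs := hfpos βs hβsroot hβsneg
  set ξ : V B →ₗ[ℝ] ℝ := (fI I βs) • p + (-(p βs)) • (fI I) with hξ
  have hξapply : ∀ v, ξ v = fI I βs * p v + (-(p βs)) * fI I v := by
    intro v
    rw [hξ]
    simp [LinearMap.add_apply, LinearMap.smul_apply, smul_eq_mul]
  have hξdom : Dominant cs ξ := by
    intro β hβroot
    rw [hξapply]
    rcases le_or_gt 0 (p β) with h | h
    · have := fI_nonneg I hβroot.2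
      nlinarith
    · have hβS : β ∈ S := by rw [Set.Finite.mem_toFinset]; exact ⟨hβroot, h⟩
      have hm := hβsmin β hβS
      rw [div_le_div_iff₀ (by linarith) (by linarith)] at hm
      nlinarith
  have hξI : ∀ i ∈ I, ξ (al i) = 0 := by
    intro i hi
    rw [hξapply, hpI i hi, fI_al_mem hi]
    ring
  have hξz : {β : V B | IsPosRoot cs β ∧ ξ β = 0}.Finite := by
    apply Set.Finite.subset (hneg.union (phiI_finite cs I hIfin))
    rintro β ⟨hβroot, hβz⟩
    rw [hξapply] at hβz
    rcases lt_or_ge (p β) 0 with h | h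
    · exact Or.inl ⟨hβroot, h⟩
    · right
      refine ⟨hβroot, ?_⟩
      have hf0 : fI I β = 0 := by
        have h1 := fI_nonneg I hβroot.2
        nlinarith
      exact fI_eq_zero_coords I hβroot.2 hf0
  have hfinK : Finite ↥(Subgroup.closure (cs.simple '' {b | ξ (al b) = 0})) :=
    parabolic_finite cs ξ hξz
  have hKI : {b | ξ (al b) = 0} = I := by
    have hsub : I ⊆ {b | ξ (al b) = 0} := fun i hi => hξI i hi
    by_contra hne
    have hss : I ⊂ {b | ξ (al b) = 0} :=
      hsub.ssubset_of_ne (fun h => hne h.symm)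
    haveI := hfinK
    haveI := hmax _ hss
    exact not_finite ↥(Subgroup.closure (cs.simple '' {b | ξ (al b) = 0}))
  obtain ⟨y, c, hβs_eq⟩ := hβsroot.1
  have hξβs : ξ βs = 0 := by rw [hξapply]; ring
  have hfix : FixedF cs ξ (y * cs.simple c * y⁻¹) := by
    intro v
    rw [rho_reflection cs y c v, map_sub, map_smul, ← hβs_eq, hξβs]
    simp
  have hmem : (y * cs.simple c * y⁻¹) ∈ Subgroup.closure (cs.simple '' I) := by
    have := stab_dominant cs ξ hξdom (cs.length (y * cs.simple c * y⁻¹)) _ rfl hfix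
    rwa [hKI] at this
  have hcoords : ∀ b ∉ I, βs b = 0 := by
    intro b hb
    have h1 := rho_coords_of_mem_closure cs I _ hmem βs b hb
    have h2 : rho cs (y * cs.simple c * y⁻¹) βs = -βs := by
      rw [rho_reflection cs y c βs, ← hβs_eq, bform_root_self cs hβsroot.1]
      module
    rw [h2, Finsupp.neg_apply] at h1
    linarith
  have := lin_eval_zero p I hpI βs hcoords
  linarith


/-! ### Main theorem -/

theorem main_thm (I : Set B)
    (hfin : Finite ↥(Subgroup.closure (cs.simple '' I)))
    (hmax : ∀ J : Set B, I ⊂ J → Infinite ↥(Subgroup.closure (cs.simple '' J)))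
    (H : Subgroup W) (hHfin : Finite ↥H)
    (hle : Subgroup.closure (cs.simple '' I) ≤ H) :
    H = Subgroup.closure (cs.simple '' I) := by
  classical
  haveI : Fintype ↥H := Fintype.ofFinite _
  set p : V B →ₗ[ℝ] ℝ :=
    ∑ x : ↥H, (fI I).comp (rho cs ((x : W)⁻¹)) with hp
  have hpapply : ∀ v, p v = ∑ x : ↥H, fI I (rho cs ((x:W)⁻¹) v) := by
    intro v
    rw [hp, LinearMap.sum_apply]
    rfl
  have hinv : ∀ y ∈ H, FixedF cs p y := by
    intro y hy v
    rw [hpapply, hpapply]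
    apply Fintype.sum_equiv (Equiv.mulLeft (⟨y, hy⟩ : ↥H)⁻¹)
    intro x
    congr 1
    rw [← rho_mul_apply]
    have hxe : ((x : W))⁻¹ * y = ((((⟨y, hy⟩ : ↥H)⁻¹ * x : ↥H)) : W)⁻¹ := by
      push_cast
      group
    rw [show ((Equiv.mulLeft (⟨y, hy⟩ : ↥H)⁻¹) x) = ((⟨y, hy⟩ : ↥H)⁻¹ * x : ↥H) from rfl,
      ← hxe]
  have hUfin : (⋃ x : ↥H, invRootSet cs ((x:W)⁻¹)).Finite :=
    Set.finite_iUnion (fun x => invRootSet_finite cs _ _ rfl)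
  have hmemU : ∀ β : V B, IsPosRoot cs β →
      (∃ x : ↥H, fI I (rho cs ((x:W)⁻¹) β) < 0) →
      β ∈ ⋃ x : ↥H, invRootSet cs ((x:W)⁻¹) := by
    rintro β hroot ⟨x, hx⟩
    have hγroot : @IsRoot _ _ _ _ cs (rho cs ((x:W)⁻¹) β) := root_rho cs hroot.1 _
    have hγneg : NegV (rho cs ((x:W)⁻¹) β) := by
      rcases root_dichotomy cs hγroot with h | h
      · exact absurd (fI_nonneg I h) (not_le.mpr hx)
      · exact h
    exact Set.mem_iUnion.mpr ⟨x, hroot, hγneg⟩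
  have hnegfin : {β : V B | IsPosRoot cs β ∧ p β < 0}.Finite := by
    apply hUfin.subset
    rintro β ⟨hroot, hneg⟩
    apply hmemU β hroot
    by_contra hall
    push_neg at hall
    rw [hpapply] at hneg
    have := Finset.sum_nonneg (fun (x : ↥H) (_ : x ∈ Finset.univ) => hall x)
    linarith
  have hpI : ∀ i ∈ I, p (al i) = 0 := by
    intro i hi
    have hsi : cs.simple i ∈ H := hle (Subgroup.subset_closure ⟨i, hi, rfl⟩)
    have h1 := hinv _ hsi (al i)
    rw [rho_simple, sig_al_self, map_neg] at h1
    linarith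
  have hdom := prop_R cs I hfin hmax p hnegfin hpI
  have hzfin : {β : V B | IsPosRoot cs β ∧ p β = 0}.Finite := by
    apply Set.Finite.subset (hUfin.union (phiI_finite cs I hfin))
    rintro β ⟨hroot, hz⟩
    by_cases hex : ∃ x : ↥H, fI I (rho cs ((x:W)⁻¹) β) < 0
    · exact Or.inl (hmemU β hroot hex)
    · push_neg at hex
      right
      refine ⟨hroot, ?_⟩
      have hz' : ∑ x : ↥H, fI I (rho cs ((x:W)⁻¹) β) = 0 := by
        rw [← hpapply]; exact hz
      have hall0 := (Finset.sum_eq_zero_iff_of_nonneg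
        (fun (x : ↥H) (_ : x ∈ Finset.univ) => hex x)).mp hz'
      have h1 := hall0 ⟨1, H.one_mem⟩ (Finset.mem_univ _)
      have h2 : fI I β = 0 := by
        rw [show (((⟨1, H.one_mem⟩ : ↥H) : W))⁻¹ = (1 : W) by simp, map_one] at h1
        exact h1
      exact fI_eq_zero_coords I hroot.2 h2
  have hKfin := parabolic_finite cs p hzfin
  have hIK : I ⊆ {b | p (al b) = 0} := fun i hi => hpI i hi
  have hKI : {b | p (al b) = 0} = I := by
    by_contra hne
    have hss : I ⊂ {b | p (al b) = 0} := hIK.ssubset_of_ne (fun h => hne h.symm)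
    haveI := hKfin
    haveI := hmax _ hss
    exact not_finite ↥(Subgroup.closure (cs.simple '' {b | p (al b) = 0}))
  apply _root_.le_antisymm
  · intro h hh
    have := stab_dominant cs p hdom (cs.length h) h rfl (hinv h hh)
    rwa [hKI] at this
  · exact hle

end CoxAux

/-- If `W_I` is a maximal finite standard parabolic subgroup of a Coxeter group `W` (i.e. `W_I`
is finite and `W_J` is infinite for every `J` with `I ⊊ J ⊆ S`), then `W_I` is a maximal finite
subgroup of `W`: every finite subgroup of `W` containing `W_I` equals `W_I`. -/
theorem stmt_11 {B W : Type*} [Group W] {M : CoxeterMatrix B} (cs : CoxeterSystem M W)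
    (I : Set B)
    (hfin : Finite ↥(Subgroup.closure (cs.simple '' I)))
    (hmax : ∀ J : Set B, I ⊂ J → Infinite ↥(Subgroup.closure (cs.simple '' J)))
    (H : Subgroup W) (hHfin : Finite ↥H)
    (hle : Subgroup.closure (cs.simple '' I) ≤ H) :
    H = Subgroup.closure (cs.simple '' I) :=
  CoxAux.main_thm cs I hfin hmax H hHfin hle
end

section
/- Let n ≥ 3 and let (W,S) be a Coxeter system of type A_n: S = {x₁, …, x_n} with m(x_i, x_{i+1}) = 3 for 1 ≤ i ≤ n−1 and m(x_i, x_j) = 2 whenever |i − j| ≥ 2. Then for each i ∈ {1,…,n}, the subgroup W^{⊥x_i} of W generated by all reflections t with t ≠ x_i and t x_i = x_i t is a Coxeter group of type A_{n−2}; in particular, W^{⊥x_i} is isomorphic to the symmetric group on n−1 letters. -/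
open Equiv Function Subgroup

section AuxPerm

variable {α : Type*} [DecidableEq α]

private lemma swap_braid {a b c : α} (hab : a ≠ b) (hbc : b ≠ c) (hac : a ≠ c) :
    (Equiv.swap a b * Equiv.swap b c) ^ 3 = 1 := by
  have h1 : Equiv.swap b c * Equiv.swap a b * Equiv.swap b c = Equiv.swap a c := by
    rw [Equiv.swap_comm a c]; exact Equiv.swap_mul_swap_mul_swap hab hac
  have h2 : Equiv.swap a b * Equiv.swap a c * (Equiv.swap a b)⁻¹ =
      Equiv.swap b c := by
    rw [← Equiv.swap_apply_apply, Equiv.swap_apply_left,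
      Equiv.swap_apply_of_ne_of_ne hac.symm (hbc.symm)]
  calc (Equiv.swap a b * Equiv.swap b c) ^ 3
      = Equiv.swap a b * (Equiv.swap b c * Equiv.swap a b * Equiv.swap b c) *
        Equiv.swap a b * Equiv.swap b c := by
        simp only [pow_succ, pow_zero, one_mul, mul_assoc]
    _ = Equiv.swap a b * Equiv.swap a c * Equiv.swap a b * Equiv.swap b c := by rw [h1]
    _ = Equiv.swap a b * Equiv.swap a c * (Equiv.swap a b)⁻¹ * Equiv.swap b c := by
        rw [Equiv.swap_inv]
    _ = Equiv.swap b c * Equiv.swap b c := by rw [h2]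
    _ = 1 := Equiv.swap_mul_self b c

private lemma swap_disjoint_commute {a b c d : α} (hca : c ≠ a) (hcb : c ≠ b)
    (hda : d ≠ a) (hdb : d ≠ b) :
    Equiv.swap a b * Equiv.swap c d = Equiv.swap c d * Equiv.swap a b := by
  have hdisj : (Equiv.swap a b).Disjoint (Equiv.swap c d) := by
    intro z
    by_cases hz : z = c ∨ z = d
    · left
      rcases hz with rfl | rfl
      · exact Equiv.swap_apply_of_ne_of_ne hca hcb
      · exact Equiv.swap_apply_of_ne_of_ne hda hdb
    · right
      push_neg at hz
      exact Equiv.swap_apply_of_ne_of_ne hz.1 hz.2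
  exact hdisj.commute.eq

private lemma swap_noncomm {p q r : α} (hpq : p ≠ q) (hqr : q ≠ r) (hpr : p ≠ r) :
    Equiv.swap p q * Equiv.swap q r ≠ Equiv.swap q r * Equiv.swap p q := by
  intro h
  have := DFunLike.congr_fun h r
  simp only [Equiv.Perm.mul_apply, Equiv.swap_apply_right,
    Equiv.swap_apply_of_ne_of_ne hpr.symm hqr.symm] at this
  exact hpq this

/-- distinct commuting swaps are disjoint -/
private lemma swap_commute_disjoint {a b c d : α} (hab : a ≠ b) (hcd : c ≠ d)
    (hne : Equiv.swap c d ≠ Equiv.swap a b)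
    (hcomm : Equiv.swap c d * Equiv.swap a b = Equiv.swap a b * Equiv.swap c d) :
    c ≠ a ∧ c ≠ b ∧ d ≠ a ∧ d ≠ b := by
  refine ⟨?_, ?_, ?_, ?_⟩
  · rintro rfl
    have hdb : d ≠ b := by rintro rfl; exact hne rfl
    refine swap_noncomm (p := d) (q := c) (r := b) hcd.symm hab hdb ?_
    rw [Equiv.swap_comm d c]; exact hcomm
  · rintro rfl
    have hda : d ≠ a := by
      rintro rfl
      exact hne (Equiv.swap_comm c d)
    refine swap_noncomm (p := d) (q := c) (r := a) hcd.symm hab.symm hda ?_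
    rw [Equiv.swap_comm d c]
    rw [Equiv.swap_comm a c] at hcomm
    exact hcomm
  · rintro rfl
    have hcb : c ≠ b := by rintro rfl; exact hne (Equiv.swap_comm c d)
    refine swap_noncomm (p := c) (q := d) (r := b) hcd hab hcb ?_
    exact hcomm
  · rintro rfl
    have hca : c ≠ a := by rintro rfl; exact hne rfl
    refine swap_noncomm (p := c) (q := d) (r := a) hcd hab.symm hca ?_
    rw [Equiv.swap_comm a d] at hcomm
    exact hcomm

/-- there is a permutation sending one pair of distinct points to another -/
private lemma exists_perm_two {a b c d : α} (hab : a ≠ b) (hcd : c ≠ d)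
    (hba : b ≠ a) : ∃ σ : Equiv.Perm α, σ a = c ∧ σ b = d := by
  classical
  by_cases hbc : b = c
  · subst hbc
    -- need σ a = b, σ b = d, with a ≠ b, b ≠ d
    by_cases had : a = d
    · subst had
      exact ⟨Equiv.swap a b, Equiv.swap_apply_left a b, Equiv.swap_apply_right a b⟩
    · refine ⟨Equiv.swap a d * Equiv.swap a b, ?_, ?_⟩
      · simp only [Equiv.Perm.mul_apply, Equiv.swap_apply_left]
        exact Equiv.swap_apply_of_ne_of_ne hba hcd
      · simp only [Equiv.Perm.mul_apply, Equiv.swap_apply_right]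
        exact Equiv.swap_apply_left a d
  · -- b ∉ {a, c}
    refine ⟨Equiv.swap b d * Equiv.swap a c, ?_, ?_⟩
    · simp only [Equiv.Perm.mul_apply, Equiv.swap_apply_left]
      exact Equiv.swap_apply_of_ne_of_ne (fun h => hbc h.symm) hcd
    · simp only [Equiv.Perm.mul_apply]
      rw [Equiv.swap_apply_of_ne_of_ne hba hbc, Equiv.swap_apply_left]

/-- `Equiv.permCongr` as a `MulEquiv`. -/
private def permMulEquiv {α β : Type*} (e : α ≃ β) : Equiv.Perm α ≃* Equiv.Perm β :=
  { Equiv.permCongr e with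
    map_mul' := fun f g => by
      ext y
      simp [Equiv.permCongr_apply, Equiv.Perm.mul_apply] }

end AuxPerm

section AuxGrowth

private lemma square_one {G : Type*} [Group G] {a b : G} (ha : a * a = 1) (hb : b * b = 1)
    (hc : a * b = b * a) : (a * b) ^ 2 = 1 := by
  rw [sq]
  calc a * b * (a * b) = a * (b * a) * b := by simp only [mul_assoc]
    _ = a * (a * b) * b := by rw [← hc]
    _ = (a * a) * (b * b) := by simp only [mul_assoc]
    _ = 1 := by rw [ha, hb, one_mul]

private lemma braid_of_cube {G : Type*} [Group G] {a b : G} (ha : a * a = 1) (hb : b * b = 1)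
    (h : (a * b) ^ 3 = 1) : a * b * a = b * a * b := by
  have hainv : a⁻¹ = a := inv_eq_of_mul_eq_one_right ha
  have hbinv : b⁻¹ = b := inv_eq_of_mul_eq_one_right hb
  have h6 : a * b * a * (b * a * b) = 1 := by
    rw [show a * b * a * (b * a * b) = (a * b) ^ 3 by
      simp only [pow_succ, pow_zero, one_mul, mul_assoc]]
    exact h
  calc a * b * a = (b * a * b)⁻¹ := eq_inv_of_mul_eq_one_left h6
    _ = b⁻¹ * a⁻¹ * b⁻¹ := by simp [mul_inv_rev, mul_assoc]
    _ = b * a * b := by rw [hainv, hbinv]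

private lemma comm_of_square {G : Type*} [Group G] {a b : G} (ha : a * a = 1) (hb : b * b = 1)
    (h : (a * b) ^ 2 = 1) : a * b = b * a := by
  have hainv : a⁻¹ = a := inv_eq_of_mul_eq_one_right ha
  have hbinv : b⁻¹ = b := inv_eq_of_mul_eq_one_right hb
  have h4 : a * b * (a * b) = 1 := by
    rw [show a * b * (a * b) = (a * b) ^ 2 by
      simp only [pow_succ, pow_zero, one_mul, mul_assoc]]
    exact h
  calc a * b = (a * b)⁻¹ := eq_inv_of_mul_eq_one_left h4
    _ = b⁻¹ * a⁻¹ := by rw [mul_inv_rev]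
    _ = b * a := by rw [hainv, hbinv]

/-- Key counting lemma: a group generated by `k ≤ n` elements satisfying the type `A`
Coxeter relations has at most `(k+1)!` elements. -/
private lemma aux_growth {W : Type*} [Group W] {n : ℕ} (s : ℕ → W)
    (hinv : ∀ t, s t * s t = 1)
    (hbraid : ∀ t, t + 1 < n → s t * s (t + 1) * s t = s (t + 1) * s t * s (t + 1))
    (hcomm : ∀ t u, t + 2 ≤ u → u < n → s t * s u = s u * s t) :
    ∀ k, k ≤ n → Finite (closure (s '' Set.Iio k)) ∧
      Nat.card (closure (s '' Set.Iio k)) ≤ (k + 1).factorial := by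
  intro k
  induction k with
  | zero =>
    intro _
    have hempty : s '' Set.Iio 0 = (∅ : Set W) := by
      simp [Set.eq_empty_iff_forall_notMem]
    rw [hempty, Subgroup.closure_empty]
    refine ⟨inferInstance, ?_⟩
    simp [Subgroup.card_bot]
  | succ k ih =>
    intro hk1
    have hkn : k < n := hk1
    obtain ⟨hfin, hcard⟩ := ih (Nat.le_of_succ_le hk1)
    -- the descending products
    let c : ℕ → W := fun j => Nat.rec 1 (fun j cj => cj * s (k - j)) j
    have hc0 : c 0 = 1 := rfl
    have hcsucc : ∀ j, c (j + 1) = c j * s (k - j) := fun j => rfl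
    -- c j commutes with low generators
    have L1 : ∀ j t, t + j + 2 ≤ k + 1 → c j * s t = s t * c j := by
      intro j
      induction j with
      | zero => intro t _; rw [hc0, one_mul, mul_one]
      | succ j ihj =>
        intro t ht
        rw [hcsucc j, mul_assoc,
          (hcomm t (k - j) (by omega) (by omega)).symm, ← mul_assoc,
          ihj t (by omega), mul_assoc]
    -- cancellation
    have L2 : ∀ j, c (j + 1) * s (k - j) = c j := by
      intro j
      rw [hcsucc j, mul_assoc, hinv (k - j), mul_one]
    -- shifting
    have L3 : ∀ j t, j ≤ k + 1 → 1 ≤ t → t ≤ k → k + 2 ≤ t + j →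
        c j * s t = s (t - 1) * c j := by
      intro j
      induction j with
      | zero => intro t _ _ h2 h3; omega
      | succ j ihj =>
        intro t hj h1 h2 h3
        by_cases hc : k + 2 ≤ t + j
        · have hcm : s (k - j) * s t = s t * s (k - j) :=
            hcomm (k - j) t (by omega) (by omega)
          rw [hcsucc j, mul_assoc, hcm, ← mul_assoc, ihj t (by omega) h1 h2 hc, mul_assoc]
        · have hjt : t + j = k + 1 := by omega
          obtain ⟨j', rfl⟩ : ∃ j', j = j' + 1 := ⟨j - 1, by omega⟩
          have e1 : k - j' = t := by omega
          have e2 : k - (j' + 1) = t - 1 := by omega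
          rw [hcsucc (j' + 1), hcsucc j', e1, e2]
          have hb' : s t * (s (t - 1) * s t) = s (t - 1) * (s t * s (t - 1)) := by
            have hbr := hbraid (t - 1) (by omega)
            rw [show t - 1 + 1 = t from by omega] at hbr
            simpa only [mul_assoc] using hbr.symm
          have hcm : c j' * s (t - 1) = s (t - 1) * c j' := L1 j' (t - 1) (by omega)
          calc c j' * s t * s (t - 1) * s t
              = c j' * (s t * (s (t - 1) * s t)) := by simp only [mul_assoc]
            _ = c j' * (s (t - 1) * (s t * s (t - 1))) := by rw [hb']
            _ = (c j' * s (t - 1)) * (s t * s (t - 1)) := by simp only [mul_assoc]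
            _ = (s (t - 1) * c j') * (s t * s (t - 1)) := by rw [hcm]
            _ = s (t - 1) * (c j' * s t * s (t - 1)) := by simp only [mul_assoc]
    -- membership of the tails
    have hmemc : ∀ j, c j ∈ closure (s '' Set.Iio (k + 1)) := by
      intro j
      induction j with
      | zero => rw [hc0]; exact one_mem _
      | succ j ihj =>
        rw [hcsucc j]
        exact mul_mem ihj (subset_closure ⟨k - j, Set.mem_Iio.mpr (by omega), rfl⟩)
    have hWk_le : closure (s '' Set.Iio k) ≤ closure (s '' Set.Iio (k + 1)) :=
      closure_mono (Set.image_mono (Set.Iio_subset_Iio (Nat.le_succ k)))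
    -- the covering set
    set D : Set W :=
      {w | ∃ u ∈ closure (s '' Set.Iio k), ∃ j ≤ k + 1, w = u * c j} with hD_def
    have hD : ∀ w ∈ Submonoid.closure (s '' Set.Iio (k + 1)), ∀ d ∈ D, d * w ∈ D := by
      intro w hw
      refine Submonoid.closure_induction (motive := fun w _ => ∀ d ∈ D, d * w ∈ D)
        ?_ ?_ ?_ hw
      · rintro g ⟨t, ht, rfl⟩ d ⟨u, hu, j, hj, rfl⟩
        simp only [Set.mem_Iio] at ht
        rcases Nat.lt_or_ge (t + j) k with hcase | hcase
        · refine ⟨u * s t,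
            mul_mem hu (subset_closure ⟨t, Set.mem_Iio.mpr (by omega), rfl⟩), j, hj, ?_⟩
          rw [mul_assoc u (c j) (s t), L1 j t (by omega), ← mul_assoc]
        · by_cases h2 : t + j = k
          · refine ⟨u, hu, j + 1, by omega, ?_⟩
            rw [hcsucc j, show k - j = t from by omega, mul_assoc]
          · by_cases h3 : t + j = k + 1
            · obtain ⟨j', rfl⟩ : ∃ j', j = j' + 1 := ⟨j - 1, by omega⟩
              refine ⟨u, hu, j', by omega, ?_⟩
              have e1 : k - j' = t := by omega
              have : s t = s (k - j') := by rw [e1]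
              rw [mul_assoc, this, L2 j']
            · have h1t : 1 ≤ t := by omega
              refine ⟨u * s (t - 1),
                mul_mem hu (subset_closure ⟨t - 1, Set.mem_Iio.mpr (by omega), rfl⟩),
                j, hj, ?_⟩
              rw [mul_assoc u (c j) (s t), L3 j t hj h1t (by omega) (by omega), ← mul_assoc]
      · intro d hd; simpa using hd
      · intro w1 w2 hw1 hw2 ih1 ih2 d hd
        rw [← mul_assoc]
        exact ih2 _ (ih1 d hd)
    have hsub : ∀ w ∈ closure (s '' Set.Iio (k + 1)), w ∈ D := by
      intro w hw
      have hSinv : (s '' Set.Iio (k + 1))⁻¹ ⊆ s '' Set.Iio (k + 1) := by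
        rintro g hg
        obtain ⟨t, ht, hts⟩ := hg
        have : g = s t := by
          have := congrArg (·⁻¹) hts
          simp only [inv_inv] at this
          rw [← this, inv_eq_of_mul_eq_one_right (hinv t)]
        exact this ▸ ⟨t, ht, rfl⟩
      have hw' : w ∈ Submonoid.closure (s '' Set.Iio (k + 1)) := by
        have h1 : w ∈ (closure (s '' Set.Iio (k + 1))).toSubmonoid := hw
        rw [Subgroup.closure_toSubmonoid, Set.union_eq_self_of_subset_right hSinv] at h1
        exact h1
      have h1D : (1 : W) ∈ D := ⟨1, one_mem _, 0, by omega, by rw [hc0, mul_one]⟩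
      have := hD w hw' 1 h1D
      simpa using this
    -- the surjection
    have : Finite (closure (s '' Set.Iio k)) := hfin
    let F : (closure (s '' Set.Iio k)) × Fin (k + 2) → (closure (s '' Set.Iio (k + 1))) :=
      fun p => ⟨(p.1 : W) * c (p.2 : ℕ), mul_mem (hWk_le p.1.2) (hmemc _)⟩
    have hF : Function.Surjective F := by
      rintro ⟨w, hw⟩
      obtain ⟨u, hu, j, hj, rfl⟩ := hsub w hw
      exact ⟨(⟨u, hu⟩, ⟨j, by omega⟩), rfl⟩
    refine ⟨Finite.of_surjective F hF, ?_⟩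
    calc Nat.card (closure (s '' Set.Iio (k + 1)))
        ≤ Nat.card ((closure (s '' Set.Iio k)) × Fin (k + 2)) :=
          Nat.card_le_card_of_surjective F hF
      _ = Nat.card (closure (s '' Set.Iio k)) * (k + 2) := by
          rw [Nat.card_prod, Nat.card_eq_fintype_card (α := Fin (k + 2)), Fintype.card_fin]
      _ ≤ (k + 1).factorial * (k + 2) := Nat.mul_le_mul_right _ hcard
      _ = (k + 2).factorial := by rw [Nat.factorial_succ (k + 1)]; ring

end AuxGrowth

/-- Let `n ≥ 3` and let `(W,S)` be a Coxeter system of type `Aₙ`: the generators are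
`x 0, …, x (n-1)` (a bijective enumeration of `S`) with `m(x i, x j) = 3` for `j = i + 1` and
`m(x i, x j) = 2` for `j ≥ i + 2`.  Then for each generator `x i`, the subgroup `W^{⊥ x i}`
generated by all reflections `t ≠ x i` commuting with `x i` is isomorphic to the symmetric
group on `n - 1` letters (it is a Coxeter group of type `A_{n-2}`). -/
theorem stmt_18 {B W : Type*} [Group W] {M : CoxeterMatrix B} (cs : CoxeterSystem M W)
    (n : ℕ) (hn : 3 ≤ n) (x : Fin n → B) (hx : Function.Bijective x)
    (hm1 : ∀ i j : Fin n, (i : ℕ) + 1 = (j : ℕ) → M (x i) (x j) = 3)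
    (hm2 : ∀ i j : Fin n, (i : ℕ) + 2 ≤ (j : ℕ) → M (x i) (x j) = 2) :
    ∀ i : Fin n,
      Nonempty ((Subgroup.closure {t : W | cs.IsReflection t ∧ t ≠ cs.simple (x i) ∧
          t * cs.simple (x i) = cs.simple (x i) * t}) ≃* Equiv.Perm (Fin (n - 1))) := by
  classical
  intro i
  set T : Set W := {t : W | cs.IsReflection t ∧ t ≠ cs.simple (x i) ∧
    t * cs.simple (x i) = cs.simple (x i) * t} with hTdef
  -- the indexing equivalence
  let ε : B ≃ Fin n := (Equiv.ofBijective x hx).symm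
  have hxε : ∀ b, x (ε b) = b := fun b => (Equiv.ofBijective x hx).apply_symm_apply b
  have hεx : ∀ t : Fin n, ε (x t) = t := fun t => (Equiv.ofBijective x hx).symm_apply_apply t
  -- the candidate images of the simple reflections
  let f : B → Equiv.Perm (Fin (n + 1)) := fun b => Equiv.swap (ε b).castSucc (ε b).succ
  have hfval : ∀ t : Fin n, f (x t) = Equiv.swap t.castSucc t.succ := by
    intro t; simp only [f, hεx t]
  have hne_cs : ∀ t : Fin n, (t.castSucc : Fin (n + 1)) ≠ t.succ :=
    fun t => (Fin.castSucc_lt_succ : t.castSucc < t.succ).ne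
  have hfinv : ∀ b, f b * f b = 1 := fun b => Equiv.swap_mul_self _ _
  -- liftability
  have key : ∀ b b', ((ε b : Fin n) : ℕ) < ((ε b' : Fin n) : ℕ) →
      (f b * f b') ^ M b b' = 1 := by
    intro b b' hlt
    have hb : x (ε b) = b := hxε b
    have hb' : x (ε b') = b' := hxε b'
    by_cases h1 : ((ε b : Fin n) : ℕ) + 1 = ((ε b' : Fin n) : ℕ)
    · have hM : M b b' = 3 := by rw [← hb, ← hb']; exact hm1 _ _ h1
      rw [hM]
      have hmid : ((ε b : Fin n).succ : Fin (n + 1)) = (ε b' : Fin n).castSucc :=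
        Fin.ext (by simp [Fin.val_succ, Fin.coe_castSucc, h1])
      show (Equiv.swap (ε b).castSucc (ε b).succ *
        Equiv.swap (ε b').castSucc (ε b').succ) ^ 3 = 1
      rw [← hmid]
      exact swap_braid (hne_cs (ε b))
        (Fin.ne_of_val_ne (by simp [Fin.val_succ]; omega))
        (Fin.ne_of_val_ne (by simp [Fin.coe_castSucc, Fin.val_succ]; omega))
    · have h2 : ((ε b : Fin n) : ℕ) + 2 ≤ ((ε b' : Fin n) : ℕ) := by omega
      have hM : M b b' = 2 := by rw [← hb, ← hb']; exact hm2 _ _ h2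
      rw [hM]
      refine square_one (hfinv b) (hfinv b') ?_
      show Equiv.swap (ε b).castSucc (ε b).succ * Equiv.swap (ε b').castSucc (ε b').succ =
        Equiv.swap (ε b').castSucc (ε b').succ * Equiv.swap (ε b).castSucc (ε b).succ
      exact (swap_disjoint_commute
        (Fin.ne_of_val_ne (by simp [Fin.coe_castSucc]; omega))
        (Fin.ne_of_val_ne (by simp [Fin.coe_castSucc, Fin.val_succ]; omega))
        (Fin.ne_of_val_ne (by simp [Fin.coe_castSucc, Fin.val_succ]; omega))
        (Fin.ne_of_val_ne (by simp [Fin.val_succ]; omega))).symm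
  have hlift : M.IsLiftable f := by
    intro b b'
    rcases Nat.lt_trichotomy ((ε b : Fin n) : ℕ) ((ε b' : Fin n) : ℕ) with h | h | h
    · exact key b b' h
    · have hbb : b = b' := by
        have : ε b = ε b' := Fin.ext h
        rw [← hxε b, ← hxε b', this]
      subst hbb
      rw [M.diagonal b, pow_one, hfinv b]
    · have hM : M b b' = M b' b := M.symmetric b b'
      have hswap : f b * f b' = (f b' * f b)⁻¹ := by
        rw [mul_inv_rev]
        show (f b)⁻¹ * (f b')⁻¹ = _
        simp only [f, Equiv.swap_inv]
      rw [hM, hswap, inv_pow, key b' b h, inv_one]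
  -- the homomorphism to the symmetric group
  let φ : W →* Equiv.Perm (Fin (n + 1)) := cs.lift ⟨f, hlift⟩
  have hφs : ∀ b, φ (cs.simple b) = f b := fun b => cs.lift_apply_simple hlift b
  have hφt : ∀ t : Fin n, φ (cs.simple (x t)) = Equiv.swap t.castSucc t.succ := by
    intro t; rw [hφs, hfval]
  -- surjectivity
  have hsurj : Function.Surjective φ := by
    intro g
    have hle : Submonoid.closure
        (Set.range fun t : Fin n => Equiv.swap t.castSucc t.succ) ≤ MonoidHom.mrange φ := by
      rw [Submonoid.closure_le]
      rintro g ⟨t, rfl⟩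
      exact ⟨cs.simple (x t), hφt t⟩
    obtain ⟨w, hw⟩ := hle ((Equiv.Perm.mclosure_swap_castSucc_succ n) ▸ Submonoid.mem_top g)
    exact ⟨w, hw⟩
  -- cardinality bound
  let sq : ℕ → W := fun t => if h : t < n then cs.simple (x ⟨t, h⟩) else 1
  have hsq_inv : ∀ t, sq t * sq t = 1 := by
    intro t
    by_cases h : t < n
    · simp only [sq, dif_pos h]; exact cs.simple_mul_simple_self _
    · simp [sq, dif_neg h]
  have hsq_braid : ∀ t, t + 1 < n → sq t * sq (t + 1) * sq t = sq (t + 1) * sq t * sq (t + 1) := by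
    intro t ht
    have h1 : t < n := by omega
    simp only [sq, dif_pos h1, dif_pos ht]
    refine braid_of_cube (cs.simple_mul_simple_self _) (cs.simple_mul_simple_self _) ?_
    have := cs.simple_mul_simple_pow (x ⟨t, h1⟩) (x ⟨t + 1, ht⟩)
    rwa [hm1 ⟨t, h1⟩ ⟨t + 1, ht⟩ rfl] at this
  have hsq_comm : ∀ t u, t + 2 ≤ u → u < n → sq t * sq u = sq u * sq t := by
    intro t u h2 hu
    have htn : t < n := by omega
    simp only [sq, dif_pos htn, dif_pos hu]
    refine comm_of_square (cs.simple_mul_simple_self _) (cs.simple_mul_simple_self _) ?_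
    have := cs.simple_mul_simple_pow (x ⟨t, htn⟩) (x ⟨u, hu⟩)
    rwa [hm2 ⟨t, htn⟩ ⟨u, hu⟩ h2] at this
  obtain ⟨hfin, hcard⟩ := aux_growth sq hsq_inv hsq_braid hsq_comm n le_rfl
  have htop : Subgroup.closure (sq '' Set.Iio n) = ⊤ := by
    have himg : sq '' Set.Iio n = Set.range cs.simple := by
      ext w
      constructor
      · rintro ⟨t, ht, rfl⟩
        simp only [Set.mem_Iio] at ht
        refine ⟨x ⟨t, ht⟩, ?_⟩
        show cs.simple (x ⟨t, ht⟩) = (if h : t < n then cs.simple (x ⟨t, h⟩) else 1)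
        rw [dif_pos ht]
      · rintro ⟨b, rfl⟩
        obtain ⟨t, rfl⟩ := hx.2 b
        refine ⟨t.1, Set.mem_Iio.mpr t.2, ?_⟩
        show (if h : (t : ℕ) < n then cs.simple (x ⟨t, h⟩) else 1) = cs.simple (x t)
        rw [dif_pos t.2, Fin.eta]
    rw [himg]
    exact cs.subgroup_closure_range_simple
  rw [htop] at hfin hcard
  have hfinW : Finite W := Finite.of_equiv _ Subgroup.topEquiv.toEquiv
  have hcardW : Nat.card W ≤ (n + 1).factorial := by rw [← Subgroup.card_top]; exact hcard
  have hcardP : Nat.card (Equiv.Perm (Fin (n + 1))) = (n + 1).factorial := by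
    rw [Nat.card_eq_fintype_card, Fintype.card_perm, Fintype.card_fin]
  have hbij : Function.Bijective φ := by
    rw [Nat.bijective_iff_surjective_and_card]
    refine ⟨hsurj, le_antisymm ?_ (Nat.card_le_card_of_surjective φ hsurj)⟩
    rw [hcardP]; exact hcardW
  let E : W ≃* Equiv.Perm (Fin (n + 1)) := MulEquiv.ofBijective φ hbij
  have hE : ∀ z, E z = φ z := fun z => rfl
  -- the distinguished transposition
  set a : Fin (n + 1) := i.castSucc with ha_def
  set b : Fin (n + 1) := i.succ with hb_def
  have hab : a ≠ b := hne_cs i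
  have hτ : E (cs.simple (x i)) = Equiv.swap a b := by rw [hE]; exact hφt i
  -- the image of the set of orthogonal reflections
  set S₀ : Set (Equiv.Perm (Fin (n + 1))) :=
    {g | ∃ c d, c ≠ d ∧ c ≠ a ∧ c ≠ b ∧ d ≠ a ∧ d ≠ b ∧ g = Equiv.swap c d} with hS₀def
  have himage : ⇑E '' T = S₀ := by
    apply Set.Subset.antisymm
    · rintro g ⟨t, ⟨hrefl, hne, hcm⟩, rfl⟩
      obtain ⟨w, b', heq⟩ := hrefl
      have hswap : E t = Equiv.swap (E w ((ε b').castSucc)) (E w ((ε b').succ)) := by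
        have hsb' : E (cs.simple b') = Equiv.swap ((ε b').castSucc) ((ε b').succ) := by
          rw [hE]; exact hφs b'
        rw [heq, map_mul, map_mul, map_inv, hsb', (Equiv.swap_apply_apply (E w) _ _).symm]
      have hccdd : E w ((ε b').castSucc) ≠ E w ((ε b').succ) :=
        fun h => (hne_cs (ε b')) ((E w).injective h)
      have hgne : E t ≠ Equiv.swap a b := by
        rw [← hτ]; exact fun h => hne (E.injective h)
      have hgcm : E t * Equiv.swap a b = Equiv.swap a b * E t := by
        rw [← hτ, ← map_mul, ← map_mul, hcm]
      obtain ⟨h1, h2, h3, h4⟩ := swap_commute_disjoint hab hccdd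
        (by rw [← hswap]; exact hgne) (by rw [← hswap]; exact hgcm)
      exact ⟨_, _, hccdd, h1, h2, h3, h4, hswap⟩
    · rintro g ⟨c, d, hcd, hca, hcb, hda, hdb, rfl⟩
      obtain ⟨σ, hσa, hσb⟩ := exists_perm_two hab hcd hab.symm
      have hconj : Equiv.swap c d = σ * Equiv.swap a b * σ⁻¹ := by
        calc Equiv.swap c d = Equiv.swap (σ a) (σ b) := by rw [hσa, hσb]
          _ = σ * Equiv.swap a b * σ⁻¹ := Equiv.swap_apply_apply σ a b
      refine ⟨E.symm (Equiv.swap c d), ⟨?_, ?_, ?_⟩, E.apply_symm_apply _⟩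
      · refine ⟨E.symm σ, x i, ?_⟩
        apply E.injective
        rw [map_mul, map_mul, map_inv, E.apply_symm_apply, E.apply_symm_apply, hτ, ← hconj]
      · intro h
        have heq2 : Equiv.swap c d = Equiv.swap a b := by
          rw [← hτ, ← h, E.apply_symm_apply]
        have := DFunLike.congr_fun heq2 c
        rw [Equiv.swap_apply_left, Equiv.swap_apply_of_ne_of_ne hca hcb] at this
        exact hcd this.symm
      · apply E.injective
        rw [map_mul, map_mul, E.apply_symm_apply, hτ]
        exact (swap_disjoint_commute hca hcb hda hdb).symm
  -- identify the closure of `S₀` with the permutations of the complement of `{a, b}`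
  have hinjS : Function.Injective
      (Equiv.Perm.ofSubtype : Equiv.Perm {y : Fin (n + 1) // y ≠ a ∧ y ≠ b} →*
        Equiv.Perm (Fin (n + 1))) := by
    intro σ σ' h
    apply Equiv.ext; intro z
    apply Subtype.ext
    have := DFunLike.congr_fun h (z : Fin (n + 1))
    rwa [Equiv.Perm.ofSubtype_apply_coe, Equiv.Perm.ofSubtype_apply_coe] at this
  have hcloS : Subgroup.closure S₀ =
      (Equiv.Perm.ofSubtype : Equiv.Perm {y : Fin (n + 1) // y ≠ a ∧ y ≠ b} →*
        Equiv.Perm (Fin (n + 1))).range := by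
    apply le_antisymm
    · rw [Subgroup.closure_le]
      rintro g ⟨c, d, hcd, hca, hcb, hda, hdb, rfl⟩
      exact ⟨Equiv.swap ⟨c, hca, hcb⟩ ⟨d, hda, hdb⟩, Equiv.Perm.ofSubtype_swap_eq _ _⟩
    · rintro g ⟨σ, rfl⟩
      have hστ : σ ∈ Subgroup.closure
          {τ : Equiv.Perm {y : Fin (n + 1) // y ≠ a ∧ y ≠ b} | τ.IsSwap} := by
        rw [Equiv.Perm.closure_isSwap]; trivial
      have hmap := Subgroup.mem_map_of_mem (Equiv.Perm.ofSubtype) hστ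
      rw [MonoidHom.map_closure] at hmap
      have himg2 : (⇑(Equiv.Perm.ofSubtype :
          Equiv.Perm {y : Fin (n + 1) // y ≠ a ∧ y ≠ b} →* Equiv.Perm (Fin (n + 1))) ''
          {τ | τ.IsSwap}) ⊆ S₀ := by
        rintro g' ⟨τ, ⟨u, v, huv, rfl⟩, rfl⟩
        exact ⟨↑u, ↑v, fun h => huv (Subtype.ext h), u.2.1, u.2.2, v.2.1, v.2.2,
          (Equiv.Perm.ofSubtype_swap_eq u v)⟩
      exact Subgroup.closure_mono himg2 hmap
  have hmapT : Subgroup.map E.toMonoidHom (Subgroup.closure T) = Subgroup.closure S₀ := by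
    rw [MonoidHom.map_closure]
    have himage' : ⇑E.toMonoidHom '' T = S₀ := himage
    rw [himage']
  -- the final cardinality computation
  have hcards : Fintype.card {y : Fin (n + 1) // y ≠ a ∧ y ≠ b} = n - 1 := by
    rw [Fintype.card_subtype]
    have hfil : (Finset.univ.filter fun y : Fin (n + 1) => y ≠ a ∧ y ≠ b) =
        ({a, b} : Finset (Fin (n + 1)))ᶜ := by
      ext z
      simp [not_or]
    rw [hfil, Finset.card_compl, Finset.card_pair hab, Fintype.card_fin]
    omega
  refine ⟨((Subgroup.equivMapOfInjective (Subgroup.closure T) E.toMonoidHom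
    E.injective).trans (MulEquiv.subgroupCongr (hmapT.trans hcloS))).trans
    ((MonoidHom.ofInjective hinjS).symm.trans
      (permMulEquiv (Fintype.equivFinOfCardEq hcards)))⟩
end
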